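/- arXiv:1409.2117 — 2 statements merged into one kernel-verified Lean document; each statement's English description precedes it below -/
import Mathlib

section
/- Let G be a connected triangle-free vertex-transitive simple graph of degree k ≥ 5, let s be an integer with 4 ≤ s ≤ 8, suppose λ_s(G) exists and λ_s(G) ≤ 3k, and let S be a λ_s-atom of G. Then for every A ⊆ S with 1 ≤ |A| ≤ |S| − s, the number of edges from A to S \ A is strictly greater than d_G(A)/2. -/
open SimpleGraph

section Defs

variable {V : Type*}

/-- A simple graph is vertex-transitive if any vertex can be mapped to any other
by a graph automorphism. -/
def VertexTransitive (G : SimpleGraph V) : Prop :=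
  ∀ x y : V, ∃ φ : G ≃g G, φ x = y

/-- A graph is `p`-factor-critical if the removal of any set of `p` vertices
results in a graph with a perfect matching. -/
def PFactorCritical (G : SimpleGraph V) (p : ℕ) : Prop :=
  ∀ X : Set V, X.ncard = p → ∃ M : (G.induce Xᶜ).Subgraph, M.IsPerfectMatching

/-- A graph is factor-critical if the removal of any single vertex results in a
graph with a perfect matching. -/
def IsFactorCritical {W : Type*} (H : SimpleGraph W) : Prop :=
  ∀ v : W, ∃ M : (H.induce ({v}ᶜ : Set W)).Subgraph, M.IsPerfectMatching

/-- `∇(X)`: the set of edges of `G` with exactly one end in `X`. -/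
def edgeBoundary (G : SimpleGraph V) (X : Set V) : Set (Sym2 V) :=
  {e | e ∈ G.edgeSet ∧ ∃ x ∈ X, ∃ y ∈ Xᶜ, e = s(x, y)}

/-- The set of edges of `G` with both ends in `X`. -/
def edgesWithin (G : SimpleGraph V) (X : Set V) : Set (Sym2 V) :=
  {e | e ∈ G.edgeSet ∧ ∀ v ∈ e, v ∈ X}

/-- The set of edges of `G` with one end in `A` and the other end in `S \ A`
(i.e. the edge boundary of `A` inside the induced subgraph `G[S]` when `A ⊆ S`). -/
def inducedEdgeBoundary (G : SimpleGraph V) (S A : Set V) : Set (Sym2 V) :=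
  {e | e ∈ G.edgeSet ∧ ∃ x ∈ A, ∃ y ∈ S \ A, e = s(x, y)}

/-- `F` is an `s`-restricted edge-cut of `G` if deleting `F` disconnects `G` and
every component of `G − F` has at least `s` vertices. -/
def IsRestrictedEdgeCut (G : SimpleGraph V) (s : ℕ) (F : Set (Sym2 V)) : Prop :=
  F ⊆ G.edgeSet ∧ ¬ (G.deleteEdges F).Connected ∧
    ∀ c : (G.deleteEdges F).ConnectedComponent, s ≤ c.supp.ncard

/-- `λ_s(G)`: the minimum cardinality of an `s`-restricted edge-cut of `G`. -/
noncomputable def lambdaS (G : SimpleGraph V) (s : ℕ) : ℕ :=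
  sInf (Set.ncard '' {F | IsRestrictedEdgeCut G s F})

/-- A `λ_s`-fragment: a vertex set whose edge boundary is an `s`-restricted
edge-cut of minimum cardinality `λ_s(G)`. -/
def IsLambdaFragment (G : SimpleGraph V) (s : ℕ) (X : Set V) : Prop :=
  IsRestrictedEdgeCut G s (edgeBoundary G X) ∧ (edgeBoundary G X).ncard = lambdaS G s

/-- A `λ_s`-atom: a `λ_s`-fragment of minimum cardinality. -/
def IsLambdaAtom (G : SimpleGraph V) (s : ℕ) (X : Set V) : Prop :=
  IsLambdaFragment G s X ∧ ∀ Y : Set V, IsLambdaFragment G s Y → X.ncard ≤ Y.ncard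

/-- The odd girth of `G`: the length of a shortest odd cycle of `G`. -/
noncomputable def oddGirth (G : SimpleGraph V) : ℕ :=
  sInf {n | Odd n ∧ ∃ (v : V) (c : G.Walk v v), c.IsCycle ∧ c.length = n}

/-- `X` is an independent set of `G`. -/
def IsIndependentSet (G : SimpleGraph V) (X : Set V) : Prop :=
  ∀ x ∈ X, ∀ y ∈ X, ¬ G.Adj x y

/-- The independence number `α(G)`. -/
noncomputable def indepNum (G : SimpleGraph V) : ℕ :=
  sSup {n | ∃ X : Set V, IsIndependentSet G X ∧ X.ncard = n}

/-- The number of trivial (single-vertex) components of `G − X`. -/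
noncomputable def trivialComponentCount (G : SimpleGraph V) (X : Set V) : ℕ :=
  {c : (G.induce Xᶜ).ConnectedComponent | c.supp.ncard = 1}.ncard

/-- The number of odd components of `G − X`. -/
noncomputable def oddComponentCount (G : SimpleGraph V) (X : Set V) : ℕ :=
  {c : (G.induce Xᶜ).ConnectedComponent | Odd c.supp.ncard}.ncard

/-- The number of nontrivial components of `G − X`. -/
noncomputable def nontrivialComponentCount (G : SimpleGraph V) (X : Set V) : ℕ :=
  {c : (G.induce Xᶜ).ConnectedComponent | 2 ≤ c.supp.ncard}.ncard

/-- An imprimitive block of `G`: a proper non-empty vertex set that every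
automorphism either fixes setwise or maps to a disjoint set. -/
def IsImprimitiveBlock (G : SimpleGraph V) (X : Set V) : Prop :=
  X.Nonempty ∧ X ≠ Set.univ ∧ ∀ φ : G ≃g G, (⇑φ) '' X = X ∨ ((⇑φ) '' X) ∩ X = ∅

/-- A connected graph is `q`-extendable if it has a perfect matching and every
matching of size `q` is contained in a perfect matching. -/
def Extendable (G : SimpleGraph V) (q : ℕ) : Prop :=
  (∃ M : G.Subgraph, M.IsPerfectMatching) ∧
    ∀ M : G.Subgraph, M.IsMatching → M.edgeSet.ncard = q →
      ∃ P : G.Subgraph, P.IsPerfectMatching ∧ M ≤ P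

end Defs


section Aux

set_option linter.unusedSectionVars false
variable {V : Type*} {G : SimpleGraph V}

/-- edges between X and Y -/
def crossE (G : SimpleGraph V) (X Y : Set V) : Set (Sym2 V) :=
  {e | e ∈ G.edgeSet ∧ ∃ x ∈ X, ∃ y ∈ Y, e = s(x, y)}

lemma mk_mem_crossE_iff {X Y : Set V} {a b : V} :
    s(a, b) ∈ crossE G X Y ↔ G.Adj a b ∧ ((a ∈ X ∧ b ∈ Y) ∨ (b ∈ X ∧ a ∈ Y)) := by
  constructor
  · rintro ⟨he, x, hx, y, hy, hxy⟩
    rw [Sym2.eq_iff] at hxy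
    rcases hxy with ⟨rfl, rfl⟩ | ⟨rfl, rfl⟩
    · exact ⟨he, Or.inl ⟨hx, hy⟩⟩
    · exact ⟨he, Or.inr ⟨hx, hy⟩⟩
  · rintro ⟨hadj, ⟨hx, hy⟩ | ⟨hx, hy⟩⟩
    · exact ⟨G.mem_edgeSet.mpr hadj, a, hx, b, hy, rfl⟩
    · exact ⟨G.mem_edgeSet.mpr hadj, b, hx, a, hy, Sym2.eq_swap⟩

lemma crossE_symm (X Y : Set V) : crossE G X Y = crossE G Y X := by
  refine Set.ext fun e => Sym2.ind (fun a b => ?_) e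
  rw [mk_mem_crossE_iff, mk_mem_crossE_iff]
  tauto

lemma edgeBoundary_eq_crossE (X : Set V) : edgeBoundary G X = crossE G X Xᶜ := rfl

lemma mk_mem_edgeBoundary_iff {X : Set V} {a b : V} :
    s(a, b) ∈ edgeBoundary G X ↔ G.Adj a b ∧ ((a ∈ X ∧ b ∉ X) ∨ (b ∈ X ∧ a ∉ X)) := by
  rw [edgeBoundary_eq_crossE, mk_mem_crossE_iff]; rfl

lemma crossE_union_right (X Y₁ Y₂ : Set V) :
    crossE G X (Y₁ ∪ Y₂) = crossE G X Y₁ ∪ crossE G X Y₂ := by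
  refine Set.ext fun e => Sym2.ind (fun a b => ?_) e
  simp only [Set.mem_union, mk_mem_crossE_iff, Set.mem_union]
  tauto

lemma crossE_disjoint {X Y₁ Y₂ : Set V} (h12 : Y₁ ∩ Y₂ = ∅) (hx2 : X ∩ Y₂ = ∅) :
    crossE G X Y₁ ∩ crossE G X Y₂ = ∅ := by
  rw [Set.eq_empty_iff_forall_notMem] at h12 hx2 ⊢
  intro e
  induction e using Sym2.ind with
  | _ a b =>
    rintro ⟨h1, h2⟩
    rw [mk_mem_crossE_iff] at h1 h2
    obtain ⟨-, h1⟩ := h1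
    obtain ⟨-, h2⟩ := h2
    rcases h1 with ⟨ha1, hb1⟩ | ⟨hb1, ha1⟩ <;> rcases h2 with ⟨ha2, hb2⟩ | ⟨hb2, ha2⟩
    · exact h12 b ⟨hb1, hb2⟩
    · exact hx2 a ⟨ha1, ha2⟩
    · exact hx2 b ⟨hb1, hb2⟩
    · exact h12 a ⟨ha1, ha2⟩


lemma hG_adj {X : Set V} {a b : V} :
    (G.deleteEdges (edgeBoundary G X)).Adj a b ↔ G.Adj a b ∧ (a ∈ X ↔ b ∈ X) := by
  rw [SimpleGraph.deleteEdges_adj, mk_mem_edgeBoundary_iff]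
  constructor
  · rintro ⟨h, hn⟩
    refine ⟨h, ?_⟩
    by_contra hiff
    exact hn ⟨h, by tauto⟩
  · rintro ⟨h, hiff⟩
    exact ⟨h, by tauto⟩

lemma walk_transfer {H H' : SimpleGraph V} {P : V → Prop}
    (hP : ∀ u w, P u → H.Adj u w → P w)
    (hA : ∀ u w, P u → P w → H.Adj u w → H'.Adj u w) :
    ∀ {a b : V}, H.Walk a b → P a → H'.Reachable a b ∧ P b
  | _, _, SimpleGraph.Walk.nil, ha => ⟨Reachable.refl _, ha⟩
  | _, _, SimpleGraph.Walk.cons h' q, ha => by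
    have hv := hP _ _ ha h'
    obtain ⟨hr, hb⟩ := walk_transfer hP hA q hv
    exact ⟨((hA _ _ ha hv h').reachable).trans hr, hb⟩

lemma reach_transfer {H H' : SimpleGraph V} {P : V → Prop}
    (hP : ∀ u w, P u → H.Adj u w → P w)
    (hA : ∀ u w, P u → P w → H.Adj u w → H'.Adj u w)
    {a b : V} (h : H.Reachable a b) (ha : P a) : H'.Reachable a b ∧ P b := by
  obtain ⟨p⟩ := h
  exact walk_transfer hP hA p ha

/-- component support of `v` in `G` minus the edge boundary of `X` -/
def csup (G : SimpleGraph V) (X : Set V) (v : V) : Set V :=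
  ((G.deleteEdges (edgeBoundary G X)).connectedComponentMk v).supp

lemma mem_csup_iff {X : Set V} {v w : V} :
    w ∈ csup G X v ↔ (G.deleteEdges (edgeBoundary G X)).Reachable w v := by
  rw [csup, ConnectedComponent.mem_supp_iff, ConnectedComponent.eq]

lemma self_mem_csup {X : Set V} {v : V} : v ∈ csup G X v :=
  mem_csup_iff.mpr (Reachable.refl _)

lemma reach_side {X : Set V} {a b : V}
    (h : (G.deleteEdges (edgeBoundary G X)).Reachable a b) : a ∈ X ↔ b ∈ X := by
  constructor
  · intro ha
    exact (reach_transfer (P := (· ∈ X)) (fun u w hu huw => (hG_adj.mp huw).2.mp hu)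
      (fun _ _ _ _ h => h) h ha).2
  · intro hb
    exact (reach_transfer (P := (· ∈ X)) (fun u w hu huw => (hG_adj.mp huw).2.mp hu)
      (fun _ _ _ _ h => h) h.symm hb).2

lemma csup_subset_side {X : Set V} {v : V} (hv : v ∈ X) : csup G X v ⊆ X := by
  intro w hw
  exact (reach_side (mem_csup_iff.mp hw)).mpr hv

lemma csup_subset_side' {X : Set V} {v : V} (hv : v ∉ X) : csup G X v ⊆ Xᶜ := by
  intro w hw hwX
  exact hv ((reach_side (mem_csup_iff.mp hw)).mp hwX)

lemma csup_eq_of_mem {X : Set V} {v w : V} (h : w ∈ csup G X v) :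
    csup G X w = csup G X v := by
  unfold csup
  rw [csup, ConnectedComponent.mem_supp_iff] at h
  rw [h]

/-- an edge leaving the component support of `v` leaves `X` as well -/
lemma csup_edge_out {X : Set V} {v x y : V} (hv : v ∈ X) (hx : x ∈ csup G X v)
    (hxy : G.Adj x y) (hy : y ∉ csup G X v) : y ∉ X := by
  intro hyX
  apply hy
  rw [mem_csup_iff]
  have : (G.deleteEdges (edgeBoundary G X)).Adj y x :=
    hG_adj.mpr ⟨hxy.symm, ⟨fun _ => csup_subset_side hv hx, fun _ => hyX⟩⟩
  exact this.reachable.trans (mem_csup_iff.mp hx)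

lemma edgeBoundary_csup_subset {X : Set V} {v : V} (hv : v ∈ X) :
    edgeBoundary G (csup G X v) ⊆ edgeBoundary G X := by
  intro e he
  induction e using Sym2.ind with
  | _ a b =>
    rw [mk_mem_edgeBoundary_iff] at he ⊢
    obtain ⟨hadj, h⟩ := he
    refine ⟨hadj, ?_⟩
    rcases h with ⟨ha, hb⟩ | ⟨hb, ha⟩
    · exact Or.inl ⟨csup_subset_side hv ha, csup_edge_out hv ha hadj hb⟩
    · exact Or.inr ⟨csup_subset_side hv hb, csup_edge_out hv hb hadj.symm ha⟩

lemma edgeBoundary_csup_disjoint {X : Set V} {v w : V} (hv : v ∈ X) (hw : w ∈ X)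
    (hvw : csup G X v ∩ csup G X w = ∅) :
    edgeBoundary G (csup G X v) ∩ edgeBoundary G (csup G X w) = ∅ := by
  rw [Set.eq_empty_iff_forall_notMem] at hvw ⊢
  intro e
  induction e using Sym2.ind with
  | _ a b =>
    rintro ⟨h1, h2⟩
    rw [mk_mem_edgeBoundary_iff] at h1 h2
    obtain ⟨hadj, h1⟩ := h1
    obtain ⟨-, h2⟩ := h2
    rcases h1 with ⟨ha1, hb1⟩ | ⟨hb1, ha1⟩ <;> rcases h2 with ⟨ha2, hb2⟩ | ⟨hb2, ha2⟩
    · exact hvw a ⟨ha1, ha2⟩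
    · exact csup_edge_out hv ha1 hadj hb1 (csup_subset_side hw hb2)
    · exact csup_edge_out hv hb1 hadj.symm ha1 (csup_subset_side hw ha2)
    · exact hvw b ⟨hb1, hb2⟩

end Aux

lemma csup_le {X Y : Set V} (P : V → Prop) {v : V} (hv : P v)
    (hP : ∀ u w, P u → (G.deleteEdges (edgeBoundary G X)).Adj u w → P w)
    (hPA : ∀ u w, P u → P w → G.Adj u w → (u ∈ Y ↔ w ∈ Y)) :
    csup G X v ⊆ csup G Y v := by
  intro w hw
  rw [mem_csup_iff] at hw ⊢
  exact ((reach_transfer hP (fun u w hu hw' huw =>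
    hG_adj.mpr ⟨(hG_adj.mp huw).1, hPA u w hu hw' (hG_adj.mp huw).1⟩) hw.symm hv).1).symm

section AuxConn
set_option linter.unusedSectionVars false
variable {V : Type*} {G : SimpleGraph V}

lemma walk_exit {T : Set V} :
    ∀ {a b : V}, G.Walk a b → a ∈ T → b ∉ T → ∃ x ∈ T, ∃ y, y ∉ T ∧ G.Adj x y
  | _, _, SimpleGraph.Walk.nil, ha, hb => absurd ha hb
  | _, _, @SimpleGraph.Walk.cons _ _ _ v _ h q, ha, hb => by
    classical
    by_cases hv : v ∈ T
    · exact walk_exit q hv hb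
    · exact ⟨_, ha, v, hv, h⟩

lemma exists_exit (hconn : G.Connected) {T : Set V} (hT : T.Nonempty) (hT' : Tᶜ.Nonempty) :
    ∃ x ∈ T, ∃ y, y ∉ T ∧ G.Adj x y := by
  obtain ⟨a, ha⟩ := hT
  obtain ⟨b, hb⟩ := hT'
  obtain ⟨p⟩ := hconn.preconnected a b
  exact walk_exit p ha hb

end AuxConn

section AuxCount
set_option linter.unusedSectionVars false
variable {V : Type*} [Fintype V] [DecidableEq V] {G : SimpleGraph V} [DecidableRel G.Adj]

lemma boundary_count {k : ℕ} (hreg : G.IsRegularOfDegree k) (F : Finset V) :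
    k * F.card = (edgeBoundary G (↑F : Set V)).ncard + ∑ v ∈ F, (G.neighborFinset v ∩ F).card := by
  have h1 : ∀ v : V, (G.neighborFinset v \ F).card + (G.neighborFinset v ∩ F).card = k := by
    intro v
    rw [Finset.card_sdiff_add_card_inter]
    exact hreg v
  have hsum : k * F.card
      = ∑ v ∈ F, (G.neighborFinset v \ F).card + ∑ v ∈ F, (G.neighborFinset v ∩ F).card := by
    rw [← Finset.sum_add_distrib]
    rw [Finset.sum_congr rfl fun v _ => h1 v, Finset.sum_const, smul_eq_mul, mul_comm]
  suffices hb : (edgeBoundary G (↑F : Set V)).ncard = ∑ v ∈ F, (G.neighborFinset v \ F).card by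
    rw [hb, hsum]
  classical
  set P : Finset (V × V) := F.biUnion (fun x => (G.neighborFinset x \ F).image (fun y => (x, y)))
    with hP
  have hmemP : ∀ a b : V, (a, b) ∈ P ↔ a ∈ F ∧ G.Adj a b ∧ b ∉ F := by
    intro a b
    simp only [hP, Finset.mem_biUnion, Finset.mem_image, Finset.mem_sdiff, mem_neighborFinset,
      Prod.mk.injEq]
    constructor
    · rintro ⟨x, hx, y, ⟨hy1, hy2⟩, rfl, rfl⟩
      exact ⟨hx, hy1, hy2⟩
    · rintro ⟨ha, hab, hb⟩
      exact ⟨a, ha, b, ⟨hab, hb⟩, rfl, rfl⟩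
  have hPcard : P.card = ∑ v ∈ F, (G.neighborFinset v \ F).card := by
    rw [hP]
    rw [Finset.card_biUnion]
    · exact Finset.sum_congr rfl fun v _ =>
        Finset.card_image_of_injective _ (fun a b h => (Prod.ext_iff.mp h).2)
    · intro x hx y hy hxy
      rw [Function.onFun, Finset.disjoint_left]
      rintro ⟨a, b⟩ ha hb
      simp only [Finset.mem_image, Prod.mk.injEq] at ha hb
      obtain ⟨_, _, rfl, rfl⟩ := ha
      obtain ⟨_, _, h, rfl⟩ := hb
      exact hxy h.symm
  have hinj : Set.InjOn (fun p : V × V => s(p.1, p.2)) ↑P := by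
    rintro ⟨a, b⟩ ha ⟨c, d⟩ hc h
    simp only [Finset.mem_coe, hmemP] at ha hc
    simp only [Sym2.eq_iff] at h
    rcases h with ⟨rfl, rfl⟩ | ⟨rfl, rfl⟩
    · rfl
    · exact absurd ha.1 hc.2.2
  have hset : edgeBoundary G (↑F : Set V) = ↑(P.image (fun p : V × V => s(p.1, p.2))) := by
    ext e
    induction e using Sym2.ind with
    | _ a b =>
      simp only [mk_mem_edgeBoundary_iff, Finset.coe_image, Set.mem_image, Finset.mem_coe]
      constructor
      · rintro ⟨hadj, ⟨ha, hb⟩ | ⟨hb, ha⟩⟩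
        · exact ⟨(a, b), (hmemP a b).mpr ⟨ha, hadj, hb⟩, rfl⟩
        · exact ⟨(b, a), (hmemP b a).mpr ⟨hb, hadj.symm, ha⟩, Sym2.eq_swap⟩
      · rintro ⟨⟨x, y⟩, hxy, h⟩
        rw [hmemP] at hxy
        rw [Sym2.eq_iff] at h
        rcases h with ⟨rfl, rfl⟩ | ⟨rfl, rfl⟩
        · exact ⟨hxy.2.1, Or.inl ⟨hxy.1, hxy.2.2⟩⟩
        · exact ⟨hxy.2.1.symm, Or.inr ⟨hxy.1, hxy.2.2⟩⟩
  rw [hset, Set.ncard_coe_finset, Finset.card_image_of_injOn hinj, hPcard]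

lemma mantel_bound (htri : G.CliqueFree 3) (F : Finset V) :
    2 * ∑ v ∈ F, (G.neighborFinset v ∩ F).card ≤ F.card ^ 2 := by
  classical
  set d : V → ℕ := fun v => (G.neighborFinset v ∩ F).card with hd
  set m : ℕ := F.card with hm
  have key : ∀ v ∈ F, ∀ w ∈ G.neighborFinset v ∩ F, d v + d w ≤ m := by
    intro v hv w hw
    rw [Finset.mem_inter, mem_neighborFinset] at hw
    have hdisj : Disjoint (G.neighborFinset v ∩ F) (G.neighborFinset w ∩ F) := by
      rw [Finset.disjoint_left]
      intro u hu1 hu2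
      rw [Finset.mem_inter, mem_neighborFinset] at hu1 hu2
      exact htri {v, w, u} (is3Clique_triple_iff.mpr ⟨hw.1, hu1.1, hu2.1⟩)
    calc d v + d w = ((G.neighborFinset v ∩ F) ∪ (G.neighborFinset w ∩ F)).card :=
          (Finset.card_union_of_disjoint hdisj).symm
      _ ≤ m := Finset.card_le_card (Finset.union_subset Finset.inter_subset_right
          Finset.inter_subset_right)
  have hswap : ∑ v ∈ F, ∑ w ∈ G.neighborFinset v ∩ F, d w = ∑ v ∈ F, d v ^ 2 := by
    have hcond : ∀ x y : V, x ∈ F ∧ y ∈ G.neighborFinset x ∩ F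
        ↔ x ∈ G.neighborFinset y ∩ F ∧ y ∈ F := by
      intro x y
      rw [Finset.mem_inter, Finset.mem_inter, mem_neighborFinset, mem_neighborFinset]
      constructor
      · rintro ⟨hx, hy1, hy2⟩; exact ⟨⟨hy1.symm, hx⟩, hy2⟩
      · rintro ⟨⟨hy1, hx⟩, hy2⟩; exact ⟨hx, hy1.symm, hy2⟩
    rw [Finset.sum_comm' hcond]
    exact Finset.sum_congr rfl fun v _ => by
      rw [Finset.sum_const, smul_eq_mul, mul_comm, sq]
  have hbig : ∑ v ∈ F, ∑ w ∈ G.neighborFinset v ∩ F, (d v + d w)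
      ≤ m * ∑ v ∈ F, d v := by
    calc ∑ v ∈ F, ∑ w ∈ G.neighborFinset v ∩ F, (d v + d w)
        ≤ ∑ v ∈ F, ∑ _w ∈ G.neighborFinset v ∩ F, m :=
          Finset.sum_le_sum fun v hv => Finset.sum_le_sum fun w hw => key v hv w hw
      _ = ∑ v ∈ F, d v * m := Finset.sum_congr rfl fun v _ => by
          rw [Finset.sum_const, smul_eq_mul]
      _ = m * ∑ v ∈ F, d v := by rw [← Finset.sum_mul, mul_comm]
  have hsplit : ∑ v ∈ F, ∑ w ∈ G.neighborFinset v ∩ F, (d v + d w)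
      = ∑ v ∈ F, d v ^ 2 + ∑ v ∈ F, ∑ w ∈ G.neighborFinset v ∩ F, d w := by
    rw [← Finset.sum_add_distrib]
    exact Finset.sum_congr rfl fun v _ => by
      rw [Finset.sum_add_distrib, Finset.sum_const, smul_eq_mul, mul_comm, sq]
  rw [hswap] at hsplit
  set D : ℕ := ∑ v ∈ F, d v with hD
  set Q : ℕ := ∑ v ∈ F, d v ^ 2 with hQ
  have h2Q : 2 * Q ≤ m * D := by omega
  have hcs : D ^ 2 ≤ m * Q := by
    have := sq_sum_le_card_mul_sum_sq (s := F) (f := fun v => (d v : ℤ))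
    have hcast : ((D : ℤ)) ^ 2 ≤ (m : ℤ) * (Q : ℤ) := by
      push_cast [hD, hQ, hm]
      exact this
    exact_mod_cast hcast
  show 2 * D ≤ m ^ 2
  rcases Nat.eq_zero_or_pos D with h0 | hpos
  · simp [h0]
  · have hmul : (2 * D) * D ≤ m ^ 2 * D := by nlinarith
    exact Nat.le_of_mul_le_mul_right hmul hpos


lemma comp_count {k : ℕ} (hreg : G.IsRegularOfDegree k) (htri : G.CliqueFree 3) (C : Set V) :
    ∃ D : ℕ, k * C.ncard = (edgeBoundary G C).ncard + D ∧ 2 * D ≤ C.ncard ^ 2 := by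
  classical
  set F := C.toFinite.toFinset with hFdef
  have hcoe : (↑F : Set V) = C := Set.Finite.coe_toFinset _
  have hcard : F.card = C.ncard := by rw [← hcoe, Set.ncard_coe_finset]
  refine ⟨∑ v ∈ F, (G.neighborFinset v ∩ F).card, ?_, ?_⟩
  · rw [← hcard, ← hcoe]
    exact boundary_count hreg F
  · rw [← hcard]
    exact mantel_bound htri F

lemma csup_distinct {X : Set V} {v w : V} (hw : w ∉ csup G X v) :
    csup G X v ∩ csup G X w = ∅ := by
  rw [Set.eq_empty_iff_forall_notMem]
  rintro u ⟨hu1, hu2⟩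
  exact hw (by rw [← csup_eq_of_mem hu1, csup_eq_of_mem hu2]; exact self_mem_csup)

lemma no_shatter {k s : ℕ} (hreg : G.IsRegularOfDegree k) (htri : G.CliqueFree 3)
    (hk : 5 ≤ k) (hs1 : 4 ≤ s) (hs2 : s ≤ 8) (X : Set V)
    (hXcard : s ≤ X.ncard)
    (hsmall : ∀ v ∈ X, (csup G X v).ncard < s)
    (hdX : (edgeBoundary G X).ncard ≤ 3 * k) : False := by
  classical
  obtain ⟨v₁, hv₁⟩ : X.Nonempty := Set.nonempty_of_ncard_ne_zero (by omega)
  have hC1X : csup G X v₁ ⊆ X := csup_subset_side hv₁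
  have hm1l : 1 ≤ (csup G X v₁).ncard := (Set.ncard_pos (Set.toFinite _)).mpr ⟨v₁, self_mem_csup⟩
  have hm1u : (csup G X v₁).ncard < s := hsmall v₁ hv₁
  obtain ⟨D₁, hD₁, hD₁'⟩ := comp_count hreg htri (csup G X v₁)
  have hd1 : (edgeBoundary G (csup G X v₁)).ncard ≤ (edgeBoundary G X).ncard :=
    Set.ncard_le_ncard (edgeBoundary_csup_subset hv₁) (Set.toFinite _)
  obtain ⟨v₂, hv₂, hv₂C⟩ : ∃ v ∈ X, v ∉ csup G X v₁ := by
    by_contra h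
    push_neg at h
    have : X.ncard ≤ (csup G X v₁).ncard := Set.ncard_le_ncard h (Set.toFinite _)
    omega
  have hC2X : csup G X v₂ ⊆ X := csup_subset_side hv₂
  have hm2l : 1 ≤ (csup G X v₂).ncard := (Set.ncard_pos (Set.toFinite _)).mpr ⟨v₂, self_mem_csup⟩
  have hm2u : (csup G X v₂).ncard < s := hsmall v₂ hv₂
  obtain ⟨D₂, hD₂, hD₂'⟩ := comp_count hreg htri (csup G X v₂)
  have hdis12 : csup G X v₁ ∩ csup G X v₂ = ∅ := csup_distinct hv₂C
  have hs12 : (edgeBoundary G (csup G X v₁)).ncard + (edgeBoundary G (csup G X v₂)).ncard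
      ≤ (edgeBoundary G X).ncard := by
    rw [← Set.ncard_union_eq (Set.disjoint_iff_inter_eq_empty.mpr
      (edgeBoundary_csup_disjoint hv₁ hv₂ hdis12)) (Set.toFinite _) (Set.toFinite _)]
    exact Set.ncard_le_ncard (Set.union_subset (edgeBoundary_csup_subset hv₁)
      (edgeBoundary_csup_subset hv₂)) (Set.toFinite _)
  by_cases hM2 : 4 ≤ (csup G X v₁).ncard + (csup G X v₂).ncard
  · have key : ∀ m₁ m₂ d₁ d₂ E₁ E₂ : ℕ, 1 ≤ m₁ → m₁ ≤ 7 → 1 ≤ m₂ → m₂ ≤ 7 → 4 ≤ m₁ + m₂ →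
        k * m₁ = d₁ + E₁ → 2 * E₁ ≤ m₁ ^ 2 → k * m₂ = d₂ + E₂ → 2 * E₂ ≤ m₂ ^ 2 →
        d₁ + d₂ ≤ 3 * k → False := by
      intro m₁ m₂ d₁ d₂ E₁ E₂ h1 h2 h3 h4 h5 h6 h7 h8 h9 h10
      interval_cases m₁ <;> interval_cases m₂ <;> omega
    exact key _ _ _ _ _ _ hm1l (by omega) hm2l (by omega) hM2 hD₁ hD₁' hD₂ hD₂' (by omega)
  · obtain ⟨v₃, hv₃, hv₃C1, hv₃C2⟩ : ∃ v ∈ X, v ∉ csup G X v₁ ∧ v ∉ csup G X v₂ := by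
      by_contra h
      push_neg at h
      have hsub : X ⊆ csup G X v₁ ∪ csup G X v₂ := by
        intro v hv
        by_cases h1 : v ∈ csup G X v₁
        · exact Or.inl h1
        · exact Or.inr (h v hv h1)
      have := (Set.ncard_le_ncard hsub (Set.toFinite _)).trans (Set.ncard_union_le _ _)
      omega
    have hC3X : csup G X v₃ ⊆ X := csup_subset_side hv₃
    have hm3l : 1 ≤ (csup G X v₃).ncard := (Set.ncard_pos (Set.toFinite _)).mpr ⟨v₃, self_mem_csup⟩
    have hm3u : (csup G X v₃).ncard < s := hsmall v₃ hv₃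
    obtain ⟨D₃, hD₃, hD₃'⟩ := comp_count hreg htri (csup G X v₃)
    have hdis13 : csup G X v₁ ∩ csup G X v₃ = ∅ := csup_distinct hv₃C1
    have hdis23 : csup G X v₂ ∩ csup G X v₃ = ∅ := csup_distinct hv₃C2
    have hs123 : (edgeBoundary G (csup G X v₁)).ncard + (edgeBoundary G (csup G X v₂)).ncard
        + (edgeBoundary G (csup G X v₃)).ncard ≤ (edgeBoundary G X).ncard := by
      have hu12 : ((edgeBoundary G (csup G X v₁)) ∪ (edgeBoundary G (csup G X v₂))).ncard
          = (edgeBoundary G (csup G X v₁)).ncard + (edgeBoundary G (csup G X v₂)).ncard :=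
        Set.ncard_union_eq (Set.disjoint_iff_inter_eq_empty.mpr
          (edgeBoundary_csup_disjoint hv₁ hv₂ hdis12)) (Set.toFinite _) (Set.toFinite _)
      have hd3 : ((edgeBoundary G (csup G X v₁)) ∪ (edgeBoundary G (csup G X v₂)))
          ∩ (edgeBoundary G (csup G X v₃)) = ∅ := by
        rw [Set.union_inter_distrib_right, edgeBoundary_csup_disjoint hv₁ hv₃ hdis13,
          edgeBoundary_csup_disjoint hv₂ hv₃ hdis23, Set.union_empty]
      calc (edgeBoundary G (csup G X v₁)).ncard + (edgeBoundary G (csup G X v₂)).ncard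
            + (edgeBoundary G (csup G X v₃)).ncard
          = ((edgeBoundary G (csup G X v₁)) ∪ (edgeBoundary G (csup G X v₂))
            ∪ (edgeBoundary G (csup G X v₃))).ncard := by
            rw [Set.ncard_union_eq (Set.disjoint_iff_inter_eq_empty.mpr hd3)
              (Set.toFinite _) (Set.toFinite _), hu12]
        _ ≤ (edgeBoundary G X).ncard := Set.ncard_le_ncard (Set.union_subset
            (Set.union_subset (edgeBoundary_csup_subset hv₁) (edgeBoundary_csup_subset hv₂))
            (edgeBoundary_csup_subset hv₃)) (Set.toFinite _)
    by_cases hM3 : 4 ≤ (csup G X v₁).ncard + (csup G X v₂).ncard + (csup G X v₃).ncard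
    · have key : ∀ m₁ m₂ m₃ d₁ d₂ d₃ E₁ E₂ E₃ : ℕ, 1 ≤ m₁ → 1 ≤ m₂ → m₁ + m₂ ≤ 3 →
          1 ≤ m₃ → m₃ ≤ 7 → 4 ≤ m₁ + m₂ + m₃ → m₁ ≤ 2 → m₂ ≤ 2 →
          k * m₁ = d₁ + E₁ → 2 * E₁ ≤ m₁ ^ 2 → k * m₂ = d₂ + E₂ → 2 * E₂ ≤ m₂ ^ 2 →
          k * m₃ = d₃ + E₃ → 2 * E₃ ≤ m₃ ^ 2 → d₁ + d₂ + d₃ ≤ 3 * k → False := by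
        intro m₁ m₂ m₃ d₁ d₂ d₃ E₁ E₂ E₃ h1 h2 h3 h4 h5 h6 hb1 hb2 h7 h8 h9 h10 h11 h12 h13
        interval_cases m₁ <;> interval_cases m₂ <;> interval_cases m₃ <;> omega
      exact key _ _ _ _ _ _ _ _ _ hm1l hm2l (by omega) hm3l (by omega) hM3 (by omega) (by omega)
        hD₁ hD₁' hD₂ hD₂' hD₃ hD₃' (by omega)
    · obtain ⟨v₄, hv₄, hv₄C1, hv₄C2, hv₄C3⟩ :
          ∃ v ∈ X, v ∉ csup G X v₁ ∧ v ∉ csup G X v₂ ∧ v ∉ csup G X v₃ := by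
        by_contra h
        push_neg at h
        have hsub : X ⊆ csup G X v₁ ∪ csup G X v₂ ∪ csup G X v₃ := by
          intro v hv
          by_cases h1 : v ∈ csup G X v₁
          · exact Or.inl (Or.inl h1)
          · by_cases h2 : v ∈ csup G X v₂
            · exact Or.inl (Or.inr h2)
            · exact Or.inr (h v hv h1 h2)
        have h1 := (Set.ncard_le_ncard hsub (Set.toFinite _)).trans (Set.ncard_union_le _ _)
        have h2 := Set.ncard_union_le (csup G X v₁) (csup G X v₂)
        omega
      have hm4l : 1 ≤ (csup G X v₄).ncard := (Set.ncard_pos (Set.toFinite _)).mpr ⟨v₄, self_mem_csup⟩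
      have hm4u : (csup G X v₄).ncard < s := hsmall v₄ hv₄
      obtain ⟨D₄, hD₄, hD₄'⟩ := comp_count hreg htri (csup G X v₄)
      have hdis14 : csup G X v₁ ∩ csup G X v₄ = ∅ := csup_distinct hv₄C1
      have hdis24 : csup G X v₂ ∩ csup G X v₄ = ∅ := csup_distinct hv₄C2
      have hdis34 : csup G X v₃ ∩ csup G X v₄ = ∅ := csup_distinct hv₄C3
      have hs1234 : (edgeBoundary G (csup G X v₁)).ncard + (edgeBoundary G (csup G X v₂)).ncard
          + (edgeBoundary G (csup G X v₃)).ncard + (edgeBoundary G (csup G X v₄)).ncard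
          ≤ (edgeBoundary G X).ncard := by
        have hu12 : ((edgeBoundary G (csup G X v₁)) ∪ (edgeBoundary G (csup G X v₂))).ncard
            = (edgeBoundary G (csup G X v₁)).ncard + (edgeBoundary G (csup G X v₂)).ncard :=
          Set.ncard_union_eq (Set.disjoint_iff_inter_eq_empty.mpr
            (edgeBoundary_csup_disjoint hv₁ hv₂ hdis12)) (Set.toFinite _) (Set.toFinite _)
        have hd3 : ((edgeBoundary G (csup G X v₁)) ∪ (edgeBoundary G (csup G X v₂)))
            ∩ (edgeBoundary G (csup G X v₃)) = ∅ := by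
          rw [Set.union_inter_distrib_right, edgeBoundary_csup_disjoint hv₁ hv₃ hdis13,
            edgeBoundary_csup_disjoint hv₂ hv₃ hdis23, Set.union_empty]
        have hu123 : ((edgeBoundary G (csup G X v₁)) ∪ (edgeBoundary G (csup G X v₂))
            ∪ (edgeBoundary G (csup G X v₃))).ncard
            = (edgeBoundary G (csup G X v₁)).ncard + (edgeBoundary G (csup G X v₂)).ncard
            + (edgeBoundary G (csup G X v₃)).ncard := by
          rw [Set.ncard_union_eq (Set.disjoint_iff_inter_eq_empty.mpr hd3)
            (Set.toFinite _) (Set.toFinite _), hu12]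
        have hd4 : ((edgeBoundary G (csup G X v₁)) ∪ (edgeBoundary G (csup G X v₂))
            ∪ (edgeBoundary G (csup G X v₃))) ∩ (edgeBoundary G (csup G X v₄)) = ∅ := by
          rw [Set.union_inter_distrib_right, Set.union_inter_distrib_right,
            edgeBoundary_csup_disjoint hv₁ hv₄ hdis14,
            edgeBoundary_csup_disjoint hv₂ hv₄ hdis24,
            edgeBoundary_csup_disjoint hv₃ hv₄ hdis34, Set.union_empty, Set.union_empty]
        calc (edgeBoundary G (csup G X v₁)).ncard + (edgeBoundary G (csup G X v₂)).ncard
              + (edgeBoundary G (csup G X v₃)).ncard + (edgeBoundary G (csup G X v₄)).ncard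
            = ((edgeBoundary G (csup G X v₁)) ∪ (edgeBoundary G (csup G X v₂))
              ∪ (edgeBoundary G (csup G X v₃)) ∪ (edgeBoundary G (csup G X v₄))).ncard := by
              rw [Set.ncard_union_eq (Set.disjoint_iff_inter_eq_empty.mpr hd4)
                (Set.toFinite _) (Set.toFinite _), hu123]
          _ ≤ (edgeBoundary G X).ncard := Set.ncard_le_ncard (Set.union_subset (Set.union_subset
              (Set.union_subset (edgeBoundary_csup_subset hv₁) (edgeBoundary_csup_subset hv₂))
              (edgeBoundary_csup_subset hv₃)) (edgeBoundary_csup_subset hv₄)) (Set.toFinite _)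
      have key : ∀ m₁ m₂ m₃ m₄ d₁ d₂ d₃ d₄ E₁ E₂ E₃ E₄ : ℕ, 1 ≤ m₁ → 1 ≤ m₂ → 1 ≤ m₃ →
          m₁ + m₂ + m₃ ≤ 3 → 1 ≤ m₄ → m₄ ≤ 7 →
          k * m₁ = d₁ + E₁ → 2 * E₁ ≤ m₁ ^ 2 → k * m₂ = d₂ + E₂ → 2 * E₂ ≤ m₂ ^ 2 →
          k * m₃ = d₃ + E₃ → 2 * E₃ ≤ m₃ ^ 2 → k * m₄ = d₄ + E₄ → 2 * E₄ ≤ m₄ ^ 2 →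
          d₁ + d₂ + d₃ + d₄ ≤ 3 * k → False := by
        intro m₁ m₂ m₃ m₄ d₁ d₂ d₃ d₄ E₁ E₂ E₃ E₄ h1 h2 h3 h4 h5 h6 h7 h8 h9 h10 h11 h12
          h13 h14 h15
        have hm1 : m₁ = 1 := by omega
        have hm2 : m₂ = 1 := by omega
        have hm3 : m₃ = 1 := by omega
        subst hm1 hm2 hm3
        interval_cases m₄ <;> omega
      exact key _ _ _ _ _ _ _ _ _ _ _ _ hm1l hm2l hm3l (by omega) hm4l (by omega)
        hD₁ hD₁' hD₂ hD₂' hD₃ hD₃' hD₄ hD₄' (by omega)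

end AuxCount

/-- (Lemma 3.1(b)) With `G` connected triangle-free
vertex-transitive of degree `k ≥ 5`, `4 ≤ s ≤ 8`, `λ_s(G)` existing and at most
`3k`, and `S` a `λ_s`-atom of `G`: for every `A ⊆ S` with `1 ≤ |A| ≤ |S| − s`,
we have `d_{G[S]}(A) > d_G(A)/2`. -/
theorem statement8 {V : Type*} [Fintype V] [DecidableEq V]
    (G : SimpleGraph V) [DecidableRel G.Adj] (k s : ℕ)
    (hconn : G.Connected) (htri : G.CliqueFree 3) (hvt : VertexTransitive G)
    (hreg : G.IsRegularOfDegree k) (hk : 5 ≤ k)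
    (hs1 : 4 ≤ s) (hs2 : s ≤ 8)
    (hex : ∃ F : Set (Sym2 V), IsRestrictedEdgeCut G s F)
    (hlam : lambdaS G s ≤ 3 * k)
    (S : Set V) (hS : IsLambdaAtom G s S)
    (A : Set V) (hA : A ⊆ S) (hA1 : 1 ≤ A.ncard) (hA2 : A.ncard ≤ S.ncard - s) :
    (edgeBoundary G A).ncard < 2 * (inducedEdgeBoundary G S A).ncard := by
  classical
  by_contra hcon
  push_neg at hcon
  obtain ⟨⟨hcutS, hvalS⟩, hmin⟩ := hS
  obtain ⟨hFsub, hFdisc, hFcomp⟩ := hcutS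
  have hSne : S.Nonempty := by
    rcases Set.eq_empty_or_nonempty S with rfl | h
    · have hEB : edgeBoundary G (∅ : Set V) = ∅ := by
        ext e
        simp only [edgeBoundary, Set.mem_setOf_eq, Set.mem_empty_iff_false, false_and,
          exists_false, and_false, exists_const]
      rw [hEB, SimpleGraph.deleteEdges_empty] at hFdisc
      exact absurd hconn hFdisc
    · exact h
  have hScne : Sᶜ.Nonempty := by
    rcases Set.eq_empty_or_nonempty Sᶜ with hc | h
    · have hSuniv : S = Set.univ := by rwa [Set.compl_empty_iff] at hc
      have hEB : edgeBoundary G S = ∅ := by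
        rw [hSuniv]
        ext e
        simp only [edgeBoundary, Set.mem_setOf_eq, Set.compl_univ, Set.mem_empty_iff_false,
          false_and, exists_false, and_false, exists_const]
      rw [hEB, SimpleGraph.deleteEdges_empty] at hFdisc
      exact absurd hconn hFdisc
    · exact h
  have hsS : s ≤ S.ncard := by
    obtain ⟨v, hv⟩ := hSne
    exact (hFcomp ((G.deleteEdges (edgeBoundary G S)).connectedComponentMk v)).trans
      (Set.ncard_le_ncard (csup_subset_side hv) (Set.toFinite _))
  have hBsub : (S \ A) ⊆ S := Set.diff_subset
  have hBcard : s ≤ (S \ A).ncard := by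
    rw [Set.ncard_diff hA]
    omega
  have hAne : A.Nonempty := Set.nonempty_of_ncard_ne_zero (by omega)
  -- decompositions of complements
  have hAcompl : Aᶜ = (S \ A) ∪ Sᶜ := by
    ext v
    simp only [Set.mem_compl_iff, Set.mem_union, Set.mem_diff]
    constructor
    · intro hv
      by_cases hvS : v ∈ S
      · exact Or.inl ⟨hvS, hv⟩
      · exact Or.inr hvS
    · rintro (⟨-, hv⟩ | hv)
      · exact hv
      · exact fun hvA => hv (hA hvA)
  have hBcompl : (S \ A)ᶜ = A ∪ Sᶜ := by
    ext v
    simp only [Set.mem_compl_iff, Set.mem_union, Set.mem_diff, not_and, not_not]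
    constructor
    · intro hv
      by_cases hvS : v ∈ S
      · exact Or.inl (hv hvS)
      · exact Or.inr hvS
    · rintro (hv | hv)
      · exact fun _ => hv
      · exact fun hvS => absurd hvS hv
  have hd1 : (S \ A) ∩ Sᶜ = ∅ := by
    ext v; simp only [Set.mem_inter_iff, Set.mem_diff, Set.mem_compl_iff,
      Set.mem_empty_iff_false, iff_false]; tauto
  have hd2 : A ∩ Sᶜ = ∅ := by
    ext v; simp only [Set.mem_inter_iff, Set.mem_compl_iff, Set.mem_empty_iff_false, iff_false]
    rintro ⟨h1, h2⟩; exact h2 (hA h1)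
  have hd3 : A ∩ (S \ A) = ∅ := by
    ext v; simp only [Set.mem_inter_iff, Set.mem_diff, Set.mem_empty_iff_false, iff_false]; tauto
  have hd1' : Sᶜ ∩ (S \ A) = ∅ := by
    ext v; simp only [Set.mem_inter_iff, Set.mem_diff, Set.mem_compl_iff,
      Set.mem_empty_iff_false, iff_false]; tauto
  have hsplitA : (edgeBoundary G A).ncard
      = (crossE G A (S \ A)).ncard + (crossE G A Sᶜ).ncard := by
    rw [edgeBoundary_eq_crossE, hAcompl, crossE_union_right,
      Set.ncard_union_eq (Set.disjoint_iff_inter_eq_empty.mpr (crossE_disjoint hd1 hd2))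
        (Set.toFinite _) (Set.toFinite _)]
  have hiEB : inducedEdgeBoundary G S A = crossE G A (S \ A) := rfl
  have hsplitB : (edgeBoundary G (S \ A)).ncard
      = (crossE G (S \ A) A).ncard + (crossE G (S \ A) Sᶜ).ncard := by
    rw [edgeBoundary_eq_crossE, hBcompl, crossE_union_right,
      Set.ncard_union_eq (Set.disjoint_iff_inter_eq_empty.mpr (crossE_disjoint hd2 hd1))
        (Set.toFinite _) (Set.toFinite _)]
  have hsplitS : (edgeBoundary G S).ncard
      = (crossE G Sᶜ A).ncard + (crossE G Sᶜ (S \ A)).ncard := by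
    have hA' : ∀ v, v ∈ A → v ∈ S := fun v hv => hA hv
    have hU : crossE G S Sᶜ = crossE G Sᶜ A ∪ crossE G Sᶜ (S \ A) := by
      ext e
      induction e using Sym2.ind with
      | _ a b =>
        simp only [Set.mem_union, mk_mem_crossE_iff, Set.mem_compl_iff, Set.mem_diff]
        constructor
        · rintro ⟨hadj, ⟨haS, hbS⟩ | ⟨hbS, haS⟩⟩
          · by_cases haA : a ∈ A
            · exact Or.inl ⟨hadj, Or.inr ⟨hbS, haA⟩⟩
            · exact Or.inr ⟨hadj, Or.inr ⟨hbS, haS, haA⟩⟩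
          · by_cases hbA : b ∈ A
            · exact Or.inl ⟨hadj, Or.inl ⟨haS, hbA⟩⟩
            · exact Or.inr ⟨hadj, Or.inl ⟨haS, hbS, hbA⟩⟩
        · rintro (⟨hadj, ⟨ha, hb⟩ | ⟨hb, ha⟩⟩ | ⟨hadj, ⟨ha, hb⟩ | ⟨hb, ha⟩⟩)
          · exact ⟨hadj, Or.inr ⟨hA' b hb, ha⟩⟩
          · exact ⟨hadj, Or.inl ⟨hA' a ha, hb⟩⟩
          · exact ⟨hadj, Or.inr ⟨hb.1, ha⟩⟩
          · exact ⟨hadj, Or.inl ⟨ha.1, hb⟩⟩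
    rw [edgeBoundary_eq_crossE, hU,
      Set.ncard_union_eq (Set.disjoint_iff_inter_eq_empty.mpr (crossE_disjoint hd3 hd1'))
        (Set.toFinite _) (Set.toFinite _)]
  have hcsym : crossE G (S \ A) A = crossE G A (S \ A) := crossE_symm _ _
  have hcsym2 : crossE G Sᶜ A = crossE G A Sᶜ := crossE_symm _ _
  have hcsym3 : crossE G Sᶜ (S \ A) = crossE G (S \ A) Sᶜ := crossE_symm _ _
  rw [hiEB] at hcon
  rw [hcsym] at hsplitB
  rw [hcsym2, hcsym3] at hsplitS
  have hdBlam : (edgeBoundary G (S \ A)).ncard ≤ lambdaS G s := by omega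
  -- absorb small components of the complement side
  set SC : Set V := {v | v ∉ S \ A ∧ (csup G (S \ A) v).ncard < s} with hSCdef
  have hSC_S : SC ⊆ S := by
    rintro v hv
    obtain ⟨hv1, hv2⟩ : v ∉ S \ A ∧ (csup G (S \ A) v).ncard < s := hv
    by_contra hvS
    have hsubc : csup G S v ⊆ csup G (S \ A) v := by
      refine csup_le (P := fun u => u ∉ S) hvS ?_ ?_
      · intro u w hu huw
        exact fun hwS => hu ((hG_adj.mp huw).2.mpr hwS)
      · intro u w hu hw' _
        exact iff_of_false (fun h => hu (hBsub h)) (fun h => hw' (hBsub h))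
    have := (hFcomp ((G.deleteEdges (edgeBoundary G S)).connectedComponentMk v)).trans
      (Set.ncard_le_ncard hsubc (Set.toFinite _))
    omega
  set B2 : Set V := (S \ A) ∪ SC with hB2def
  have hB2S : B2 ⊆ S := Set.union_subset hBsub hSC_S
  have hnotB2 : ∀ v, v ∉ B2 → v ∉ S \ A ∧ ¬ (csup G (S \ A) v).ncard < s := by
    intro v hv
    have h1 : v ∉ S \ A := fun h => hv (Or.inl h)
    exact ⟨h1, fun h2 => hv (Or.inr ⟨h1, h2⟩)⟩
  have hbd2 : edgeBoundary G B2 ⊆ edgeBoundary G (S \ A) := by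
    have main : ∀ x y, G.Adj x y → x ∈ B2 → y ∉ B2 → x ∈ S \ A ∧ y ∉ S \ A := by
      intro x y hxy hx hy
      obtain ⟨hy1, hy2⟩ := hnotB2 y hy
      rcases hx with hx | hx
      · exact ⟨hx, hy1⟩
      · exfalso
        obtain ⟨hx1, hx2⟩ : x ∉ S \ A ∧ (csup G (S \ A) x).ncard < s := hx
        have hadj' : (G.deleteEdges (edgeBoundary G (S \ A))).Adj x y :=
          hG_adj.mpr ⟨hxy, iff_of_false hx1 hy1⟩
        have hcs : csup G (S \ A) y = csup G (S \ A) x :=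
          csup_eq_of_mem (mem_csup_iff.mpr hadj'.symm.reachable)
        exact hy2 (hcs ▸ hx2)
    intro e he
    induction e using Sym2.ind with
    | _ a b =>
      rw [mk_mem_edgeBoundary_iff] at he ⊢
      obtain ⟨hadj, he⟩ := he
      rcases he with ⟨ha, hb⟩ | ⟨hb, ha⟩
      · exact ⟨hadj, Or.inl (main a b hadj ha hb)⟩
      · exact ⟨hadj, Or.inr (main b a hadj.symm hb ha)⟩
  have hd2 : (edgeBoundary G B2).ncard ≤ (edgeBoundary G (S \ A)).ncard :=
    Set.ncard_le_ncard hbd2 (Set.toFinite _)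
  -- remove small components of the new inner side
  set SI : Set V := {v | v ∈ B2 ∧ (csup G B2 v).ncard < s} with hSIdef
  set B3 : Set V := B2 \ SI with hB3def
  have hB3B2 : B3 ⊆ B2 := Set.diff_subset
  have hB3S : B3 ⊆ S := hB3B2.trans hB2S
  have hbd3 : edgeBoundary G B3 ⊆ edgeBoundary G B2 := by
    have main : ∀ x y, G.Adj x y → x ∈ B3 → y ∉ B3 → x ∈ B2 ∧ y ∉ B2 := by
      intro x y hxy hx hy
      obtain ⟨hx1, hx2⟩ : x ∈ B2 ∧ x ∉ SI := hx
      refine ⟨hx1, fun hyB2 => ?_⟩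
      have hySI : y ∈ SI := by
        by_contra hySI
        exact hy ⟨hyB2, hySI⟩
      obtain ⟨-, hy2⟩ : y ∈ B2 ∧ (csup G B2 y).ncard < s := hySI
      have hadj' : (G.deleteEdges (edgeBoundary G B2)).Adj x y :=
        hG_adj.mpr ⟨hxy, iff_of_true hx1 hyB2⟩
      have hcs : csup G B2 x = csup G B2 y :=
        csup_eq_of_mem (mem_csup_iff.mpr hadj'.reachable)
      exact hx2 ⟨hx1, hcs ▸ hy2⟩
    intro e he
    induction e using Sym2.ind with
    | _ a b =>
      rw [mk_mem_edgeBoundary_iff] at he ⊢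
      obtain ⟨hadj, he⟩ := he
      rcases he with ⟨ha, hb⟩ | ⟨hb, ha⟩
      · exact ⟨hadj, Or.inl (main a b hadj ha hb)⟩
      · exact ⟨hadj, Or.inr (main b a hadj.symm hb ha)⟩
  have hd3 : (edgeBoundary G B3).ncard ≤ (edgeBoundary G B2).ncard :=
    Set.ncard_le_ncard hbd3 (Set.toFinite _)
  rcases Set.eq_empty_or_nonempty B3 with hB3e | hB3ne
  · -- all components of B2 are small: impossible by counting
    have hallsmall : ∀ v ∈ B2, (csup G B2 v).ncard < s := by
      intro v hv
      by_contra h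
      have hmem : v ∈ B3 := ⟨hv, fun hSIv => h hSIv.2⟩
      rw [hB3e] at hmem
      exact hmem
    have hB2card : s ≤ B2.ncard :=
      hBcard.trans (Set.ncard_le_ncard Set.subset_union_left (Set.toFinite _))
    exact no_shatter hreg htri hk hs1 hs2 B2 hB2card hallsmall (by omega)
  · -- B3 is a fragment contained in S
    have step_b : ∀ v, v ∉ B2 → s ≤ (csup G B2 v).ncard := by
      intro v hv
      obtain ⟨hvB, hvsmall⟩ := hnotB2 v hv
      refine (not_lt.mp hvsmall).trans (Set.ncard_le_ncard ?_ (Set.toFinite _))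
      refine csup_le (P := fun u => u ∉ B2) hv ?_ ?_
      · intro u w hu huw
        obtain ⟨huB, husmall⟩ := hnotB2 u hu
        have hwB : w ∉ S \ A := fun hw => huB ((hG_adj.mp huw).2.mpr hw)
        have hcs : csup G (S \ A) w = csup G (S \ A) u :=
          csup_eq_of_mem (mem_csup_iff.mpr huw.symm.reachable)
        rintro (hw | hw)
        · exact hwB hw
        · obtain ⟨-, hw2⟩ : w ∉ S \ A ∧ (csup G (S \ A) w).ncard < s := hw
          rw [hcs] at hw2
          exact husmall hw2
      · intro u w hu hw' _
        exact iff_of_false hu hw'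
    have step_b3 : ∀ v, v ∉ B2 → s ≤ (csup G B3 v).ncard := by
      intro v hv
      refine (step_b v hv).trans (Set.ncard_le_ncard ?_ (Set.toFinite _))
      refine csup_le (P := fun u => u ∉ B2) hv ?_ ?_
      · intro u w hu huw
        exact fun hw => hu ((hG_adj.mp huw).2.mpr hw)
      · intro u w hu hw' _
        exact iff_of_false (fun h => hu (hB3B2 h)) (fun h => hw' (hB3B2 h))
    have step_a : ∀ v, v ∈ B3 → s ≤ (csup G B3 v).ncard := by
      intro v hv
      obtain ⟨hvB2, hvSI⟩ : v ∈ B2 ∧ v ∉ SI := hv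
      have h1 : s ≤ (csup G B2 v).ncard := not_lt.mp (fun h => hvSI ⟨hvB2, h⟩)
      refine h1.trans (Set.ncard_le_ncard ?_ (Set.toFinite _))
      refine csup_le (P := fun u => u ∈ B3) (show v ∈ B3 from ⟨hvB2, hvSI⟩) ?_ ?_
      · intro u w hu huw
        obtain ⟨huB2, huSI⟩ : u ∈ B2 ∧ u ∉ SI := hu
        have hwB2 : w ∈ B2 := (hG_adj.mp huw).2.mp huB2
        have hcs : csup G B2 w = csup G B2 u :=
          csup_eq_of_mem (mem_csup_iff.mpr huw.symm.reachable)
        refine ⟨hwB2, fun hwSI => huSI ⟨huB2, ?_⟩⟩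
        obtain ⟨-, hws⟩ : w ∈ B2 ∧ (csup G B2 w).ncard < s := hwSI
        rwa [hcs] at hws
      · intro u w hu hw' _
        exact iff_of_true hu hw'
    have step_c : ∀ v, v ∈ SI → s ≤ (csup G B3 v).ncard := by
      intro v hv
      obtain ⟨hvB2, hvs⟩ : v ∈ B2 ∧ (csup G B2 v).ncard < s := hv
      have hU : csup G B2 v ⊆ SI := by
        intro u hu
        have huB2 : u ∈ B2 := csup_subset_side hvB2 hu
        have hcs : csup G B2 u = csup G B2 v := csup_eq_of_mem hu
        exact ⟨huB2, hcs ▸ hvs⟩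
      have hUco : (csup G B2 v)ᶜ.Nonempty := by
        obtain ⟨z, hz⟩ := hScne
        exact ⟨z, fun hzc => hz (hB2S (csup_subset_side hvB2 hzc))⟩
      obtain ⟨x, hx, y, hy, hxy⟩ := exists_exit hconn ⟨v, self_mem_csup⟩ hUco
      have hyB2 : y ∉ B2 := by
        intro hyB2
        apply hy
        have hadj' : (G.deleteEdges (edgeBoundary G B2)).Adj x y :=
          hG_adj.mpr ⟨hxy, iff_of_true (csup_subset_side hvB2 hx) hyB2⟩
        rw [mem_csup_iff]
        exact hadj'.symm.reachable.trans (mem_csup_iff.mp hx)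
      have hrvx : (G.deleteEdges (edgeBoundary G B2)).Reachable v x :=
        (mem_csup_iff.mp hx).symm
      have htrans := reach_transfer (H := G.deleteEdges (edgeBoundary G B2))
        (H' := G.deleteEdges (edgeBoundary G B3)) (P := fun u => u ∈ SI)
        (by
          intro u w hu huw
          obtain ⟨huB2, hus⟩ : u ∈ B2 ∧ (csup G B2 u).ncard < s := hu
          have hwB2 : w ∈ B2 := (hG_adj.mp huw).2.mp huB2
          have hcs : csup G B2 w = csup G B2 u :=
            csup_eq_of_mem (mem_csup_iff.mpr huw.symm.reachable)
          exact ⟨hwB2, hcs ▸ hus⟩)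
        (by
          intro u w hu hw' huw
          exact hG_adj.mpr ⟨(hG_adj.mp huw).1,
            iff_of_false (fun h => h.2 hu) (fun h => h.2 hw')⟩)
        hrvx (show v ∈ SI from ⟨hvB2, hvs⟩)
      have hxSI : x ∈ SI := hU hx
      have hxy3 : (G.deleteEdges (edgeBoundary G B3)).Adj x y :=
        hG_adj.mpr ⟨hxy, iff_of_false (fun h => h.2 hxSI) (fun h => hyB2 (hB3B2 h))⟩
      have hry : (G.deleteEdges (edgeBoundary G B3)).Reachable v y :=
        htrans.1.trans hxy3.reachable
      have hcs : csup G B3 y = csup G B3 v := csup_eq_of_mem (mem_csup_iff.mpr hry.symm)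
      rw [← hcs]
      exact step_b3 y hyB2
    have hcut3 : IsRestrictedEdgeCut G s (edgeBoundary G B3) := by
      refine ⟨fun e he => he.1, ?_, ?_⟩
      · intro hc
        obtain ⟨b, hb⟩ := hB3ne
        obtain ⟨z, hz⟩ := hScne
        have hside : b ∈ B3 ↔ z ∈ B3 := reach_side (hc.preconnected b z)
        exact hz (hB3S (hside.mp hb))
      · intro c
        obtain ⟨v, rfl⟩ := c.exists_rep
        by_cases hv3 : v ∈ B3
        · exact step_a v hv3
        · by_cases hv2 : v ∈ B2
          · refine step_c v ?_
            by_contra hvSI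
            exact hv3 ⟨hv2, hvSI⟩
          · exact step_b3 v hv2
    have hlam3 : lambdaS G s ≤ (edgeBoundary G B3).ncard :=
      Nat.sInf_le ⟨edgeBoundary G B3, hcut3, rfl⟩
    have heq3 : (edgeBoundary G B3).ncard = lambdaS G s := by omega
    have hge := hmin B3 ⟨hcut3, heq3⟩
    by_cases hBS : B3 = S
    · have hB2eq : B2 = S := subset_antisymm hB2S (hBS ▸ hB3B2)
      have hASC : A ⊆ SC := by
        intro a ha
        have haB2 : a ∈ B2 := hB2eq ▸ (hA ha)
        rcases haB2 with h | h
        · exact absurd ha h.2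
        · exact h
      have hSCco : SCᶜ.Nonempty := by
        obtain ⟨z, hz⟩ := hScne
        exact ⟨z, fun hzc => hz (hSC_S hzc)⟩
      obtain ⟨x, hx, y, hy, hxy⟩ := exists_exit hconn (hAne.mono hASC) hSCco
      obtain ⟨hx1, hx2⟩ : x ∉ S \ A ∧ (csup G (S \ A) x).ncard < s := hx
      have hyB : y ∈ S \ A := by
        by_contra hyB
        apply hy
        have hadj' : (G.deleteEdges (edgeBoundary G (S \ A))).Adj x y :=
          hG_adj.mpr ⟨hxy, iff_of_false hx1 hyB⟩
        have hcs : csup G (S \ A) y = csup G (S \ A) x :=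
          csup_eq_of_mem (mem_csup_iff.mpr hadj'.symm.reachable)
        exact ⟨hyB, hcs ▸ hx2⟩
      have he1 : s(y, x) ∈ edgeBoundary G (S \ A) :=
        mk_mem_edgeBoundary_iff.mpr ⟨hxy.symm, Or.inl ⟨hyB, hx1⟩⟩
      have he2 : s(y, x) ∉ edgeBoundary G B2 := by
        rw [mk_mem_edgeBoundary_iff]
        rintro ⟨-, ⟨h1, h2⟩ | ⟨h1, h2⟩⟩
        · exact h2 (Or.inr (show x ∈ SC from ⟨hx1, hx2⟩))
        · exact h2 (Or.inl hyB)
      have hlt : (edgeBoundary G B2).ncard < (edgeBoundary G (S \ A)).ncard :=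
        Set.ncard_lt_ncard ⟨hbd2, fun hsup => he2 (hsup he1)⟩ (Set.toFinite _)
      omega
    · have hlt : B3.ncard < S.ncard :=
        Set.ncard_lt_ncard ⟨hB3S, fun hsup => hBS (subset_antisymm hB3S hsup)⟩
          (Set.toFinite _)
      omega
end

section
/- Let G be a connected triangle-free vertex-transitive 5-regular simple graph of even order, let s = 5 or s = 6, and suppose λ_s(G) exists and λ_s(G) = s + 9. Then every λ_s-atom S of G satisfies |S| ≥ s + 5. -/
open SimpleGraph

open SimpleGraph

set_option linter.unusedSectionVars false

namespace St10

variable {V : Type*} [Fintype V] [DecidableEq V] (G : SimpleGraph V) [DecidableRel G.Adj]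

/-- finset of a set -/
noncomputable def fs (X : Set V) : Finset V := X.toFinite.toFinset

lemma mem_fs {X : Set V} {x : V} : x ∈ fs X ↔ x ∈ X := Set.Finite.mem_toFinset _

lemma ncard_fs (X : Set V) : X.ncard = (fs X).card :=
  Set.ncard_eq_toFinset_card X X.toFinite

lemma fs_sdiff (X Y : Set V) : fs (X \ Y) = fs X \ fs Y := by
  ext a; simp [mem_fs, fs]

lemma fs_subset {X Y : Set V} (h : X ⊆ Y) : fs X ⊆ fs Y := by
  intro a ha; rw [mem_fs] at *; exact h ha

/-- number of neighbors of x inside finset B -/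
def ndf (B : Finset V) (x : V) : ℕ := (G.neighborFinset x ∩ B).card

/-- number of edges (ordered) between A and B -/
def ew (A B : Finset V) : ℕ := ∑ x ∈ A, ndf G B x

lemma ndf_eq_sum (B : Finset V) (x : V) :
    ndf G B x = ∑ y ∈ B, if G.Adj x y then 1 else 0 := by
  have h : G.neighborFinset x ∩ B = B.filter (fun y => G.Adj x y) := by
    ext y; simp [mem_neighborFinset, and_comm]
  rw [ndf, h, Finset.card_filter]

lemma ew_comm (A B : Finset V) : ew G A B = ew G B A := by
  simp only [ew, ndf_eq_sum]
  rw [Finset.sum_comm]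
  apply Finset.sum_congr rfl; intro y _
  apply Finset.sum_congr rfl; intro x _
  simp [G.adj_comm]

lemma ndf_union {B C : Finset V} (h : Disjoint B C) (x : V) :
    ndf G (B ∪ C) x = ndf G B x + ndf G C x := by
  simp only [ndf, Finset.inter_union_distrib_left]
  exact Finset.card_union_of_disjoint (h.mono Finset.inter_subset_right Finset.inter_subset_right)

lemma ew_union_left {A B : Finset V} (C : Finset V) (h : Disjoint A B) :
    ew G (A ∪ B) C = ew G A C + ew G B C := Finset.sum_union h

lemma ew_union_right (A : Finset V) {B C : Finset V} (h : Disjoint B C) :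
    ew G A (B ∪ C) = ew G A B + ew G A C := by
  simp only [ew, ndf_union G h]; exact Finset.sum_add_distrib

lemma ndf_mono {B C : Finset V} (h : B ⊆ C) (x : V) : ndf G B x ≤ ndf G C x :=
  Finset.card_le_card (Finset.inter_subset_inter le_rfl h)

lemma ew_mono_right (A : Finset V) {B C : Finset V} (h : B ⊆ C) : ew G A B ≤ ew G A C :=
  Finset.sum_le_sum fun x _ => ndf_mono G h x

lemma ndf_singleton {x a : V} : ndf G {a} x = if G.Adj x a then 1 else 0 := by
  rw [ndf_eq_sum, Finset.sum_singleton]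

lemma ew_singleton_left (B : Finset V) (x : V) : ew G {x} B = ndf G B x := by
  simp [ew]

/-- the degree split -/
lemma ndf_add_out (hreg : G.IsRegularOfDegree 5) (B : Finset V) (x : V) :
    ndf G B x + (G.neighborFinset x \ B).card = 5 := by
  rw [ndf, Finset.card_inter_add_card_sdiff, G.card_neighborFinset_eq_degree]
  exact hreg x

lemma ndf_le_five (hreg : G.IsRegularOfDegree 5) (B : Finset V) (x : V) :
    ndf G B x ≤ 5 := by
  have := ndf_add_out G hreg B x; omega

/-- parity of ew A A -/
lemma even_ew_self (A : Finset V) : Even (ew G A A) := by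
  classical
  induction A using Finset.induction_on with
  | empty => simp [ew]
  | insert a A ha ih =>
    have hd : Disjoint {a} A := by simpa using ha
    have h4 : ew G {a} {a} = 0 := by
      simp [ew_singleton_left, ndf_singleton]
    have h5 : ew G A {a} = ew G {a} A := ew_comm G _ _
    rw [Finset.insert_eq, ew_union_left G _ hd, ew_union_right G _ hd,
      ew_union_right G _ hd, h4, h5]
    obtain ⟨k, hk⟩ := ih
    exact ⟨ew G {a} A + k, by omega⟩


lemma mem_eb {X : Set V} {a b : V} :
    s(a, b) ∈ edgeBoundary G X ↔ G.Adj a b ∧ ((a ∈ X ∧ b ∉ X) ∨ (b ∈ X ∧ a ∉ X)) := by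
  constructor
  · rintro ⟨he, x, hx, y, hy, hxy⟩
    have hadj : G.Adj a b := by rwa [SimpleGraph.mem_edgeSet] at he
    refine ⟨hadj, ?_⟩
    rw [Sym2.eq_iff] at hxy
    rcases hxy with ⟨rfl, rfl⟩ | ⟨rfl, rfl⟩
    · exact Or.inl ⟨hx, hy⟩
    · exact Or.inr ⟨hx, hy⟩
  · rintro ⟨hadj, ⟨hx, hy⟩ | ⟨hx, hy⟩⟩
    · exact ⟨(SimpleGraph.mem_edgeSet G).2 hadj, a, hx, b, hy, rfl⟩
    · exact ⟨(SimpleGraph.mem_edgeSet G).2 hadj, b, hx, a, hy, Sym2.eq_swap⟩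

lemma eb_compl (X : Set V) : edgeBoundary G Xᶜ = edgeBoundary G X := by
  ext e
  induction e with
  | _ a b =>
    rw [mem_eb, mem_eb]
    constructor
    · rintro ⟨h, ⟨hx, hy⟩ | ⟨hx, hy⟩⟩
      · exact ⟨h, Or.inr ⟨by simpa using hy, hx⟩⟩
      · exact ⟨h, Or.inl ⟨by simpa using hy, hx⟩⟩
    · rintro ⟨h, ⟨hx, hy⟩ | ⟨hx, hy⟩⟩
      · exact ⟨h, Or.inr ⟨by simpa using hy, by simpa using hx⟩⟩
      · exact ⟨h, Or.inl ⟨by simpa using hy, by simpa using hx⟩⟩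

lemma eb_subset (X : Set V) : edgeBoundary G X ⊆ G.edgeSet := fun _ he => he.1

/-- reachability within a set -/
def RW (X : Set V) : V → V → Prop :=
  Relation.ReflTransGen (fun a b => G.Adj a b ∧ a ∈ X ∧ b ∈ X)

lemma RW.symm {X : Set V} {x y : V} (h : RW G X x y) : RW G X y x := by
  have hsym : Symmetric (fun a b => G.Adj a b ∧ a ∈ X ∧ b ∈ X) := by
    intro a b ⟨h1, h2, h3⟩; exact ⟨h1.symm, h3, h2⟩
  haveI : Std.Symm (fun a b => G.Adj a b ∧ a ∈ X ∧ b ∈ X) := ⟨fun _ _ h => hsym h⟩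
  exact (Relation.ReflTransGen.symmetric (r := fun a b => G.Adj a b ∧ a ∈ X ∧ b ∈ X)).symm _ _ h

def RWConn (X : Set V) : Prop := ∀ ⦃x⦄, x ∈ X → ∀ ⦃y⦄, y ∈ X → RW G X x y

/-- RW within X gives reachability in G minus any set of edges avoiding X-internal pairs -/
lemma RW.reachable {X : Set V} {F : Set (Sym2 V)}
    (hF : ∀ a b : V, G.Adj a b → a ∈ X → b ∈ X → s(a, b) ∉ F)
    {x y : V} (h : RW G X x y) : (G.deleteEdges F).Reachable x y := by
  induction h with
  | refl => exact Reachable.refl x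
  | tail _ h2 ih =>
    exact ih.trans (SimpleGraph.Adj.reachable
      (by rw [SimpleGraph.deleteEdges_adj]; exact ⟨h2.1, hF _ _ h2.1 h2.2.1 h2.2.2⟩))

/-- reachability in G − ∇X starting inside X stays in X and is RW -/
lemma reachable_rw {X : Set V} {x y : V} (hx : x ∈ X)
    (h : (G.deleteEdges (edgeBoundary G X)).Reachable x y) : y ∈ X ∧ RW G X x y := by
  obtain ⟨w⟩ := h
  induction w with
  | nil => exact ⟨hx, Relation.ReflTransGen.refl⟩
  | cons hadj p ih =>
    rename_i a b c
    rw [SimpleGraph.deleteEdges_adj] at hadj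
    have hb : b ∈ X := by
      by_contra hb
      exact hadj.2 (mem_eb G |>.2 ⟨hadj.1, Or.inl ⟨hx, hb⟩⟩)
    obtain ⟨hc, hrw⟩ := ih hb
    exact ⟨hc, Relation.ReflTransGen.head ⟨hadj.1, hx, hb⟩ hrw⟩


lemma eb_ncard (X : Set V) :
    (edgeBoundary G X).ncard = ∑ x ∈ fs X, (G.neighborFinset x \ fs X).card := by
  classical
  set f : V → Finset (Sym2 V) := fun x => (G.neighborFinset x \ fs X).image fun y => s(x, y)
    with hf
  have hmem : ∀ e : Sym2 V, e ∈ edgeBoundary G X ↔ e ∈ (fs X).biUnion f := by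
    intro e
    induction e with
    | _ a b =>
      rw [mem_eb, Finset.mem_biUnion]
      constructor
      · rintro ⟨hadj, ⟨ha, hb⟩ | ⟨hb, ha⟩⟩
        · refine ⟨a, mem_fs.2 ha, Finset.mem_image.2 ⟨b, ?_, rfl⟩⟩
          rw [Finset.mem_sdiff, mem_neighborFinset]
          exact ⟨hadj, fun hc => hb (mem_fs.1 hc)⟩
        · refine ⟨b, mem_fs.2 hb, Finset.mem_image.2 ⟨a, ?_, Sym2.eq_swap⟩⟩
          rw [Finset.mem_sdiff, mem_neighborFinset]
          exact ⟨hadj.symm, fun hc => ha (mem_fs.1 hc)⟩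
      · rintro ⟨x, hx, himg⟩
        rw [hf, Finset.mem_image] at himg
        obtain ⟨y, hy, hxy⟩ := himg
        rw [Finset.mem_sdiff, mem_neighborFinset] at hy
        rw [Sym2.eq_iff] at hxy
        rcases hxy with ⟨rfl, rfl⟩ | ⟨rfl, rfl⟩
        · exact ⟨hy.1, Or.inl ⟨mem_fs.1 hx, fun hc => hy.2 (mem_fs.2 hc)⟩⟩
        · exact ⟨hy.1.symm, Or.inr ⟨mem_fs.1 hx, fun hc => hy.2 (mem_fs.2 hc)⟩⟩
  have hset : edgeBoundary G X = ↑((fs X).biUnion f) := by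
    ext e; rw [hmem e, Finset.mem_coe]
  rw [hset, Set.ncard_coe_finset]
  rw [Finset.card_biUnion]
  · refine Finset.sum_congr rfl fun x _ => ?_
    apply Finset.card_image_of_injOn
    intro y hy y' hy' hxy
    rw [Sym2.eq_iff] at hxy
    rcases hxy with ⟨_, h⟩ | ⟨h1, h2⟩
    · exact h
    · rw [Finset.mem_coe, Finset.mem_sdiff, mem_neighborFinset] at hy'
      exact absurd h1.symm hy'.1.ne'
  · intro x hx x' hx' hne
    rw [Function.onFun, Finset.disjoint_left]
    intro e he he'
    rw [hf, Finset.mem_image] at he he'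
    obtain ⟨y, hy, rfl⟩ := he
    obtain ⟨y', hy', h⟩ := he'
    rw [Finset.mem_sdiff] at hy hy'
    rw [Sym2.eq_iff] at h
    rcases h with ⟨rfl, _⟩ | ⟨rfl, rfl⟩
    · exact hne rfl
    · exact hy.2 hx'

lemma eb_add (hreg : G.IsRegularOfDegree 5) (X : Set V) :
    (edgeBoundary G X).ncard + ew G (fs X) (fs X) = 5 * (fs X).card := by
  rw [eb_ncard, ew, ← Finset.sum_add_distrib]
  have h : ∀ x ∈ fs X, (G.neighborFinset x \ fs X).card + ndf G (fs X) x = 5 := fun x _ => by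
    have := ndf_add_out G hreg (fs X) x; omega
  rw [Finset.sum_congr rfl h, Finset.sum_const, smul_eq_mul, mul_comm]

/-- extract a crossing-free bipartition from non-RW-connectivity -/
lemma split_of_not_rwconn {X : Set V} (h : ¬ RWConn G X) :
    ∃ C D : Set V, C ∪ D = X ∧ Disjoint C D ∧ C.Nonempty ∧ D.Nonempty ∧
      ∀ a ∈ C, ∀ b ∈ D, ¬ G.Adj a b := by
  rw [RWConn] at h
  push_neg at h
  obtain ⟨x, hx, y, hy, hxy⟩ := h
  refine ⟨{z | z ∈ X ∧ RW G X x z}, {z | z ∈ X ∧ ¬ RW G X x z}, ?_, ?_, ⟨x, hx,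
    Relation.ReflTransGen.refl⟩, ⟨y, hy, hxy⟩, ?_⟩
  · ext z
    simp only [Set.mem_union, Set.mem_setOf_eq]
    constructor
    · rintro (⟨h1, _⟩ | ⟨h1, _⟩) <;> exact h1
    · intro hz; by_cases hr : RW G X x z
      · exact Or.inl ⟨hz, hr⟩
      · exact Or.inr ⟨hz, hr⟩
  · rw [Set.disjoint_left]
    rintro z ⟨_, h1⟩ ⟨_, h2⟩
    exact h2 h1
  · rintro a ⟨ha, hra⟩ b ⟨hb, hrb⟩ hadj
    exact hrb (hra.tail ⟨hadj, ha, hb⟩)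


lemma mantel (htri : G.CliqueFree 3) :
    ∀ (n : ℕ) (C : Finset V), C.card = n → 2 * ew G C C ≤ n * n := by
  intro n
  induction n using Nat.strong_induction_on with
  | _ n ih =>
    intro C hC
    by_cases hadj : ∃ u ∈ C, ∃ v ∈ C, G.Adj u v
    · obtain ⟨u, hu, v, hv, huv⟩ := hadj
      have hne : u ≠ v := huv.ne
      have hn2 : 2 ≤ n := by
        rw [← hC]
        have : ({u, v} : Finset V) ⊆ C := by
          intro z hz; rw [Finset.mem_insert, Finset.mem_singleton] at hz
          rcases hz with rfl | rfl <;> assumption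
        calc 2 = ({u, v} : Finset V).card := by rw [Finset.card_insert_of_notMem (by simpa using hne), Finset.card_singleton]
        _ ≤ C.card := Finset.card_le_card this
      set C' := (C.erase u).erase v with hC'
      have hvC' : v ∉ C' := Finset.notMem_erase v _
      have huC' : u ∉ C' := fun h => Finset.notMem_erase u C (Finset.mem_of_mem_erase h)
      have hCsplit : C = C' ∪ {u, v} := by
        rw [hC']
        ext z
        simp only [Finset.mem_union, Finset.mem_erase, Finset.mem_insert, Finset.mem_singleton]
        constructor
        · intro hz
          by_cases h1 : z = u
          · exact Or.inr (Or.inl h1)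
          · by_cases h2 : z = v
            · exact Or.inr (Or.inr h2)
            · exact Or.inl ⟨h2, h1, hz⟩
        · rintro (⟨_, _, hz⟩ | rfl | rfl) <;> assumption
      have hdisj : Disjoint C' ({u, v} : Finset V) := by
        rw [Finset.disjoint_right]
        intro z hz
        rw [Finset.mem_insert, Finset.mem_singleton] at hz
        rcases hz with rfl | rfl <;> assumption
      have hcardC' : C'.card = n - 2 := by
        rw [hC', Finset.card_erase_of_mem (Finset.mem_erase.2 ⟨Ne.symm hne, hv⟩),
          Finset.card_erase_of_mem hu, hC]
        omega
      -- triangle-free: neighborhoods of u and v in C are disjoint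
      have htrifree : Disjoint (G.neighborFinset u ∩ C) (G.neighborFinset v ∩ C) := by
        rw [Finset.disjoint_left]
        intro w hw1 hw2
        rw [Finset.mem_inter, mem_neighborFinset] at hw1 hw2
        exact htri {u, v, w} (SimpleGraph.is3Clique_triple_iff.2 ⟨huv, hw1.1, hw2.1⟩)
      have hdusum : ndf G C u + ndf G C v ≤ n := by
        rw [ndf, ndf, ← Finset.card_union_of_disjoint htrifree, ← hC]
        exact Finset.card_le_card (Finset.union_subset (Finset.inter_subset_right)
          (Finset.inter_subset_right))
      have hWW : ew G {u, v} ({u, v} : Finset V) = 2 := by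
        have h1 : ({u, v} : Finset V) = {u} ∪ {v} := by
          ext z; simp [Finset.mem_insert]
        have hd : Disjoint ({u} : Finset V) {v} := by simpa using hne
        rw [h1, ew_union_left G _ hd, ew_union_right G _ hd, ew_union_right G _ hd]
        simp only [ew_singleton_left, ndf_singleton]
        rw [if_neg (G.irrefl), if_pos huv, if_pos huv.symm, if_neg (G.irrefl)]
      have hndfWu : ndf G ({u, v} : Finset V) u = 1 := by
        have h1 : ({u, v} : Finset V) = {u} ∪ {v} := by
          ext z; simp [Finset.mem_insert]
        have hd : Disjoint ({u} : Finset V) {v} := by simpa using hne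
        rw [h1, ndf_union G hd, ndf_singleton, ndf_singleton,
          if_neg (G.irrefl), if_pos huv]
      have hndfWv : ndf G ({u, v} : Finset V) v = 1 := by
        have h1 : ({u, v} : Finset V) = {u} ∪ {v} := by
          ext z; simp [Finset.mem_insert]
        have hd : Disjoint ({u} : Finset V) {v} := by simpa using hne
        rw [h1, ndf_union G hd, ndf_singleton, ndf_singleton,
          if_pos huv.symm, if_neg (G.irrefl)]
      have hWC' : ew G ({u, v} : Finset V) C' = ndf G C' u + ndf G C' v := by
        have h1 : ({u, v} : Finset V) = {u} ∪ {v} := by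
          ext z; simp [Finset.mem_insert]
        have hd : Disjoint ({u} : Finset V) {v} := by simpa using hne
        rw [h1, ew_union_left G _ hd, ew_singleton_left, ew_singleton_left]
      have hdu : ndf G C u = ndf G C' u + 1 := by
        rw [hCsplit, ndf_union G hdisj, hndfWu]
      have hdv : ndf G C v = ndf G C' v + 1 := by
        rw [hCsplit, ndf_union G hdisj, hndfWv]
      have hCC : ew G C C = ew G C' C' + 2 * (ndf G C' u + ndf G C' v) + 2 := by
        rw [hCsplit, ew_union_left G _ hdisj, ew_union_right G _ hdisj,
          ew_union_right G _ hdisj, hWW, hWC', ew_comm G C' ({u, v} : Finset V), hWC']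
        ring
      have hih := ih (n - 2) (by omega) C' hcardC'
      have hab : ndf G C' u + ndf G C' v ≤ n - 2 := by omega
      have hm : n - 2 + 2 = n := by omega
      nlinarith [hih, hab, hCC, Nat.sub_le n 2]
    · have hz : ew G C C = 0 := by
        rw [ew]
        apply Finset.sum_eq_zero
        intro x hx
        rw [ndf, Finset.card_eq_zero]
        ext y
        simp only [Finset.mem_inter, mem_neighborFinset, Finset.notMem_empty, iff_false]
        rintro ⟨h1, h2⟩
        exact hadj ⟨x, hx, y, h2, h1⟩
      rw [hz]
      exact Nat.zero_le _


lemma not_in_eb_of_both {X : Set V} {a b : V} (ha : a ∈ X) (hb : b ∈ X) :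
    s(a, b) ∉ edgeBoundary G X := by
  intro h
  rcases (mem_eb G).1 h with ⟨_, ⟨_, h2⟩ | ⟨_, h2⟩⟩
  · exact h2 hb
  · exact h2 ha

lemma not_in_eb_of_neither {X : Set V} {a b : V} (ha : a ∉ X) (hb : b ∉ X) :
    s(a, b) ∉ edgeBoundary G X := by
  intro h
  rcases (mem_eb G).1 h with ⟨_, ⟨h1, _⟩ | ⟨h1, _⟩⟩
  · exact ha h1
  · exact hb h1

/-- The main surgery tool: removing a set W from a fragment S yields a new restricted cut,
provided the remainder stays connected and large, and W links to the outside. -/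
lemma tool {s : ℕ} {S : Set V}
    (hres : IsRestrictedEdgeCut G s (edgeBoundary G S))
    (W : Set V) (hWS : W ⊆ S)
    (hWne : W.Nonempty)
    (hconn : RWConn G (S \ W))
    (hne' : (S \ W).Nonempty)
    (hsz : s ≤ (S \ W).ncard) 
    (hout : ∀ w ∈ W, ∃ y, y ∉ S ∧ G.Adj w y) :
    IsRestrictedEdgeCut G s (edgeBoundary G (S \ W)) := by
  have hFint : ∀ a b : V, G.Adj a b → a ∈ S \ W → b ∈ S \ W →
      s(a, b) ∉ edgeBoundary G (S \ W) := fun a b _ ha hb => not_in_eb_of_both G ha hb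
  have hFout : ∀ a b : V, G.Adj a b → a ∉ S → b ∉ S →
      s(a, b) ∉ edgeBoundary G (S \ W) := fun a b _ ha hb =>
    not_in_eb_of_neither G (fun h => ha h.1) (fun h => hb h.1)
  refine ⟨eb_subset G _, ?_, ?_⟩
  · intro hcon
    obtain ⟨x, hx⟩ := hne'
    obtain ⟨w, hw⟩ := hWne
    obtain ⟨y, hyS, _⟩ := hout w hw
    have := (reachable_rw G hx (hcon.preconnected x y)).1
    exact hyS this.1
  · intro c
    obtain ⟨v, hv⟩ := c.exists_rep
    by_cases hv1 : v ∈ S \ W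
    · have hsub : S \ W ⊆ c.supp := by
        intro z hz
        rw [SimpleGraph.ConnectedComponent.mem_supp_iff, ← hv]
        exact SimpleGraph.ConnectedComponent.eq.2 (RW.reachable G hFint (hconn hz hv1))
      exact le_trans hsz (Set.ncard_le_ncard hsub (Set.toFinite _))
    · have hstep : ∃ y₀, y₀ ∉ S ∧ (G.deleteEdges (edgeBoundary G (S \ W))).Reachable v y₀ := by
        by_cases hvS : v ∈ S
        · have hvW : v ∈ W := by
            by_contra hc
            exact hv1 ⟨hvS, hc⟩
          obtain ⟨y, hyS, hadj⟩ := hout v hvW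
          refine ⟨y, hyS, SimpleGraph.Adj.reachable ?_⟩
          rw [SimpleGraph.deleteEdges_adj]
          exact ⟨hadj, not_in_eb_of_neither G hv1 (fun h => hyS h.1)⟩
        · exact ⟨v, hvS, SimpleGraph.Reachable.refl v⟩
      obtain ⟨y₀, hy₀S, hreach⟩ := hstep
      set K := ((G.deleteEdges (edgeBoundary G S)).connectedComponentMk y₀).supp with hK
      have hKcard : s ≤ K.ncard := hres.2.2 _
      have hKsub : K ⊆ c.supp := by
        intro z hz
        have hold : (G.deleteEdges (edgeBoundary G S)).Reachable y₀ z := by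
          rw [SimpleGraph.ConnectedComponent.mem_supp_iff] at hz
          exact (SimpleGraph.ConnectedComponent.eq.1 hz).symm
        have hrw : z ∈ Sᶜ ∧ RW G Sᶜ y₀ z := by
          apply reachable_rw G (X := Sᶜ) hy₀S
          rwa [eb_compl]
        have hnew : (G.deleteEdges (edgeBoundary G (S \ W))).Reachable y₀ z :=
          RW.reachable G (fun a b hab ha hb => hFout a b hab ha hb) hrw.2
        rw [SimpleGraph.ConnectedComponent.mem_supp_iff, ← hv]
        exact SimpleGraph.ConnectedComponent.eq.2 ((hreach.trans hnew).symm)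
      exact le_trans hKcard (Set.ncard_le_ncard hKsub (Set.toFinite _))


lemma fs_singleton (v : V) : fs ({v} : Set V) = {v} := by
  ext a; rw [mem_fs]; simp

lemma fs_pair (u w : V) : fs ({u, w} : Set V) = {u, w} := by
  ext a; rw [mem_fs]; simp

lemma fs_union (X Y : Set V) : fs (X ∪ Y) = fs X ∪ fs Y := by
  ext a; rw [mem_fs, Finset.mem_union, mem_fs, mem_fs]; simp

lemma fs_disjoint {X Y : Set V} (h : Disjoint X Y) : Disjoint (fs X) (fs Y) := by
  rw [Finset.disjoint_left]
  intro a ha hb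
  rw [mem_fs] at ha hb
  exact Set.disjoint_left.1 h ha hb

lemma fs_nonempty {X : Set V} (h : X.Nonempty) : (fs X).Nonempty := by
  obtain ⟨x, hx⟩ := h; exact ⟨x, mem_fs.2 hx⟩

lemma ew_split {A B : Finset V} (h : Disjoint A B) :
    ew G (A ∪ B) (A ∪ B) = ew G A A + 2 * ew G A B + ew G B B := by
  rw [ew_union_left G _ h, ew_union_right G _ h, ew_union_right G _ h, ew_comm G B A]
  ring

lemma ew_zero_of_no_adj {A B : Finset V} (h : ∀ a ∈ A, ∀ b ∈ B, ¬ G.Adj a b) :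
    ew G A B = 0 := by
  rw [ew]
  apply Finset.sum_eq_zero
  intro x hx
  rw [ndf, Finset.card_eq_zero]
  ext y
  simp only [Finset.mem_inter, mem_neighborFinset, Finset.notMem_empty, iff_false]
  rintro ⟨h1, h2⟩
  exact h x hx y h2 h1

lemma ndf_le_card (B : Finset V) (x : V) : ndf G B x ≤ B.card :=
  Finset.card_le_card Finset.inter_subset_right

lemma exists_adj_of_ndf_pos {B : Finset V} {x : V} (h : 0 < ndf G B x) :
    ∃ y ∈ B, G.Adj x y := by
  rw [ndf, Finset.card_pos] at h
  obtain ⟨y, hy⟩ := h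
  rw [Finset.mem_inter, mem_neighborFinset] at hy
  exact ⟨y, hy.2, hy.1⟩

lemma two_le_card_of_ndf_pos {A : Finset V} {x : V} (hx : x ∈ A) (h : 0 < ndf G A x) :
    2 ≤ A.card := by
  obtain ⟨y, hy, hadj⟩ := exists_adj_of_ndf_pos G h
  have : 1 < A.card := Finset.one_lt_card.2 ⟨x, hx, y, hy, hadj.ne⟩
  omega

lemma exists_outnbr (hreg : G.IsRegularOfDegree 5) {S : Set V} {w : V}
    (h : ndf G (fs S) w ≤ 4) : ∃ y, y ∉ S ∧ G.Adj w y := by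
  have h2 := ndf_add_out G hreg (fs S) w
  have h3 : 0 < (G.neighborFinset w \ fs S).card := by omega
  rw [Finset.card_pos] at h3
  obtain ⟨y, hy⟩ := h3
  rw [Finset.mem_sdiff, mem_neighborFinset] at hy
  exact ⟨y, fun hc => hy.2 (mem_fs.2 hc), hy.1⟩

lemma pair_eq_union (u w : V) : ({u, w} : Finset V) = {u} ∪ {w} := by
  ext z; simp [Finset.mem_insert]

lemma ndf_pair_left {u w : V} (hadj : G.Adj u w) : ndf G {u, w} u = 1 := by
  rw [pair_eq_union, ndf_union G (by simpa using hadj.ne), ndf_singleton, ndf_singleton,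
    if_neg (G.irrefl), if_pos hadj]

lemma ndf_pair_right {u w : V} (hadj : G.Adj u w) : ndf G {u, w} w = 1 := by
  rw [pair_eq_union, ndf_union G (by simpa using hadj.ne), ndf_singleton, ndf_singleton,
    if_pos hadj.symm, if_neg (G.irrefl)]

lemma ew_pair_self {u w : V} (hadj : G.Adj u w) : ew G {u, w} {u, w} = 2 := by
  have hne := hadj.ne
  rw [pair_eq_union] 
  rw [ew_union_left G _ (by simpa using hne), ew_singleton_left, ew_singleton_left,
    ← pair_eq_union, ndf_pair_left G hadj, ndf_pair_right G hadj]

lemma ew_pair_left (B : Finset V) {u w : V} (hne : u ≠ w) :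
    ew G {u, w} B = ndf G B u + ndf G B w := by
  rw [pair_eq_union, ew_union_left G _ (by simpa using hne), ew_singleton_left,
    ew_singleton_left]

end St10

set_option maxHeartbeats 1600000 in
open St10 in
/-- Let `G` be a connected triangle-free vertex-transitive
5-regular graph of even order, `s = 5` or `6`, with `λ_s(G)` existing and equal
to `s + 9`. Then every `λ_s`-atom `S` of `G` satisfies `|S| ≥ s + 5`. -/
theorem statement10 {V : Type*} [Fintype V] [DecidableEq V]
    (G : SimpleGraph V) [DecidableRel G.Adj] (s : ℕ)
    (hconn : G.Connected) (htri : G.CliqueFree 3) (hvt : VertexTransitive G)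
    (hreg : G.IsRegularOfDegree 5) (heven : Even (Fintype.card V))
    (hs : s = 5 ∨ s = 6)
    (hex : ∃ F : Set (Sym2 V), IsRestrictedEdgeCut G s F)
    (hlam : lambdaS G s = s + 9)
    (S : Set V) (hS : IsLambdaAtom G s S) :
    s + 5 ≤ S.ncard := by
  classical
  by_contra hlt
  push_neg at hlt
  obtain ⟨⟨hres, hbcard⟩, hmin⟩ := hS
  rw [hlam] at hbcard
  set n := S.ncard with hn
  set Sf := fs S with hSfdef
  have hnSf : Sf.card = n := by rw [hSfdef, hn, ncard_fs]
  set M := ew G Sf Sf with hMdef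
  have hMadd : (s + 9) + M = 5 * n := by
    have h := eb_add G hreg S
    rw [hbcard, ← hSfdef, hnSf] at h
    rw [hMdef]
    exact h
  have hMeven : Even M := even_ew_self G Sf
  have lamLB : ∀ F : Set (Sym2 V), IsRestrictedEdgeCut G s F → s + 9 ≤ F.ncard := by
    intro F hF
    rw [← hlam]
    exact Nat.sInf_le ⟨F, hF, rfl⟩
  -- n ≥ s
  have hns : s ≤ n := by
    have hSne : S.Nonempty := by
      have h9 : (edgeBoundary G S).Nonempty := by
        apply Set.nonempty_of_ncard_ne_zero
        rw [hbcard]; omega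
      obtain ⟨e, he⟩ := h9
      obtain ⟨_, x, hx, y, hy, _⟩ := he
      exact ⟨x, hx⟩
    obtain ⟨x, hx⟩ := hSne
    have h1 : s ≤ ((G.deleteEdges (edgeBoundary G S)).connectedComponentMk x).supp.ncard :=
      hres.2.2 _
    have h2 : ((G.deleteEdges (edgeBoundary G S)).connectedComponentMk x).supp ⊆ S := by
      intro z hz
      rw [SimpleGraph.ConnectedComponent.mem_supp_iff] at hz
      have hr : (G.deleteEdges (edgeBoundary G S)).Reachable x z :=
        (SimpleGraph.ConnectedComponent.eq.1 hz).symm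
      exact (reachable_rw G hx hr).1
    calc s ≤ _ := h1
    _ ≤ S.ncard := Set.ncard_le_ncard h2 (Set.toFinite S)
  have hsn : n = s + 1 ∨ n = s + 3 := by
    obtain ⟨k, hk⟩ := hMeven
    rcases hs with rfl | rfl <;> omega
  -- minimum degree three inside S
  have hdelta : ∀ v ∈ S, 3 ≤ ndf G Sf v := by
    intro v hv
    by_contra hdc
    push_neg at hdc
    have hd2 : ndf G Sf v ≤ 2 := by omega
    have hvSf : v ∈ Sf := mem_fs.2 hv
    have hsub : ({v} : Finset V) ⊆ Sf := Finset.singleton_subset_iff.2 hvSf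
    have hfsX : fs (S \ {v}) = Sf \ {v} := by
      rw [fs_sdiff, fs_singleton, ← hSfdef]
    have hX'card : (fs (S \ {v})).card = n - 1 := by
      rw [hfsX, Finset.card_sdiff_of_subset hsub, hnSf, Finset.card_singleton]
    have hX'ncard : (S \ {v}).ncard = n - 1 := by rw [ncard_fs, hX'card]
    have hU : Sf = (Sf \ {v}) ∪ {v} := (Finset.sdiff_union_of_subset hsub).symm
    have hdisj : Disjoint (Sf \ {v}) ({v} : Finset V) := Finset.sdiff_disjoint
    have hndfv : ndf G Sf v = ndf G (Sf \ {v}) v := by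
      have h := ndf_union G hdisj v
      rw [← hU, ndf_singleton, if_neg (G.irrefl)] at h
      omega
    have hsplit : M = ew G (Sf \ {v}) (Sf \ {v}) + 2 * ndf G Sf v := by
      have h := ew_split G hdisj
      rw [← hU] at h
      have h2 : ew G (Sf \ {v}) ({v} : Finset V) = ndf G Sf v := by
        rw [ew_comm, ew_singleton_left, ← hndfv]
      have h3 : ew G ({v} : Finset V) ({v} : Finset V) = 0 := by
        rw [ew_singleton_left, ndf_singleton, if_neg (G.irrefl)]
      rw [h2, h3] at h
      rw [hMdef]
      omega
    by_cases hc : RWConn G (S \ {v})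
    · -- surgery : strictly cheaper cut
      have hsz : s ≤ (S \ {v}).ncard := by rw [hX'ncard]; omega
      have hne' : (S \ {v}).Nonempty := by
        apply Set.nonempty_of_ncard_ne_zero
        rw [hX'ncard]
        rcases hs with rfl | rfl <;> omega
      have hout : ∀ w ∈ ({v} : Set V), ∃ y, y ∉ S ∧ G.Adj w y := by
        intro w hw
        rw [Set.mem_singleton_iff] at hw
        subst hw
        exact exists_outnbr G hreg (by rw [← hSfdef]; omega)
      have hcut := tool G hres {v} (Set.singleton_subset_iff.2 hv) ⟨v, rfl⟩ hc hne' hsz hout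
      have hlb := lamLB _ hcut
      have hcc := eb_add G hreg (S \ {v})
      rw [hfsX, Finset.card_sdiff_of_subset hsub, hnSf, Finset.card_singleton] at hcc
      omega
    · -- Mantel contradiction
      obtain ⟨C, D, hCD, hdisjCD, hCne, hDne, hnoadj⟩ := split_of_not_rwconn G hc
      have hfsCD : fs C ∪ fs D = Sf \ {v} := by rw [← fs_union, hCD, hfsX]
      have hdisjF : Disjoint (fs C) (fs D) := fs_disjoint hdisjCD
      have hewsplit : ew G (Sf \ {v}) (Sf \ {v})
          = ew G (fs C) (fs C) + 2 * ew G (fs C) (fs D) + ew G (fs D) (fs D) := by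
        rw [← hfsCD, ew_split G hdisjF]
      have hcross : ew G (fs C) (fs D) = 0 := by
        apply ew_zero_of_no_adj
        intro a ha b hb
        exact hnoadj a (mem_fs.1 ha) b (mem_fs.1 hb)
      have hm1 := mantel G htri (fs C).card (fs C) rfl
      have hm2 := mantel G htri (fs D).card (fs D) rfl
      have hpq : (fs C).card + (fs D).card = n - 1 := by
        rw [← Finset.card_union_of_disjoint hdisjF, hfsCD, Finset.card_sdiff_of_subset hsub, hnSf,
          Finset.card_singleton]
      have hp1 : 1 ≤ (fs C).card := Finset.card_pos.2 (fs_nonempty hCne)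
      have hq1 : 1 ≤ (fs D).card := Finset.card_pos.2 (fs_nonempty hDne)
      obtain ⟨p, hp⟩ : ∃ p, (fs C).card = p := ⟨_, rfl⟩
      obtain ⟨q, hq⟩ : ∃ q, (fs D).card = q := ⟨_, rfl⟩
      rw [hp] at hm1 hpq hp1
      rw [hq] at hm2 hpq hq1
      have hp8 : p ≤ 8 := by rcases hs with rfl | rfl <;> omega
      have hq8 : q ≤ 8 := by rcases hs with rfl | rfl <;> omega
      rcases hs with rfl | rfl <;> rcases hsn with hn' | hn' <;>
        interval_cases p <;> interval_cases q <;> omega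
  -- the pair tool
  have hT2 : ∀ u w : V, u ∈ S → w ∈ S → G.Adj u w → ndf G Sf u = 3 → ndf G Sf w = 3 →
      n = s + 3 → False := by
    intro u w huS hwS hadj hu3 hw3 hn3
    have hneq : u ≠ w := hadj.ne
    have huSf : u ∈ Sf := mem_fs.2 huS
    have hwSf : w ∈ Sf := mem_fs.2 hwS
    have hsub : ({u, w} : Finset V) ⊆ Sf := by
      intro z hz
      rw [Finset.mem_insert, Finset.mem_singleton] at hz
      rcases hz with rfl | rfl <;> assumption
    have hfsX : fs (S \ {u, w}) = Sf \ {u, w} := by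
      rw [fs_sdiff, fs_pair, ← hSfdef]
    have hpaircard : ({u, w} : Finset V).card = 2 := by
      rw [Finset.card_insert_of_notMem (by simpa using hneq), Finset.card_singleton]
    have hX'card : (fs (S \ {u, w})).card = n - 2 := by
      rw [hfsX, Finset.card_sdiff_of_subset hsub, hnSf, hpaircard]
    have hX'ncard : (S \ {u, w}).ncard = n - 2 := by rw [ncard_fs, hX'card]
    have hU : Sf = (Sf \ {u, w}) ∪ {u, w} := (Finset.sdiff_union_of_subset hsub).symm
    have hdisj : Disjoint (Sf \ {u, w}) ({u, w} : Finset V) := Finset.sdiff_disjoint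
    have hndfu : ndf G Sf u = ndf G (Sf \ {u, w}) u + 1 := by
      have h := ndf_union G hdisj u
      rw [← hU, ndf_pair_left G hadj] at h
      exact h
    have hndfw : ndf G Sf w = ndf G (Sf \ {u, w}) w + 1 := by
      have h := ndf_union G hdisj w
      rw [← hU, ndf_pair_right G hadj] at h
      exact h
    have hsplit : M = ew G (Sf \ {u, w}) (Sf \ {u, w}) + 10 := by
      have h := ew_split G hdisj
      rw [← hU] at h
      have h2 : ew G (Sf \ {u, w}) ({u, w} : Finset V)
          = ndf G (Sf \ {u, w}) u + ndf G (Sf \ {u, w}) w := by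
        rw [ew_comm, ew_pair_left G _ hneq]
      rw [h2, ew_pair_self G hadj] at h
      rw [hMdef]
      omega
    by_cases hc : RWConn G (S \ {u, w})
    · -- surgery : equal cut, smaller fragment
      have hsz : s ≤ (S \ {u, w}).ncard := by rw [hX'ncard]; omega
      have hne' : (S \ {u, w}).Nonempty := by
        apply Set.nonempty_of_ncard_ne_zero
        rw [hX'ncard]
        rcases hs with rfl | rfl <;> omega
      have hWsub : ({u, w} : Set V) ⊆ S := by
        intro z hz
        rcases hz with rfl | rfl
        · exact huS
        · exact hwS
      have hout : ∀ x ∈ ({u, w} : Set V), ∃ y, y ∉ S ∧ G.Adj x y := by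
        intro x hx
        rcases hx with rfl | rfl
        · exact exists_outnbr G hreg (by rw [← hSfdef]; omega)
        · exact exists_outnbr G hreg (by rw [← hSfdef]; omega)
      have hcut := tool G hres {u, w} hWsub ⟨u, Or.inl rfl⟩ hc hne' hsz hout
      have hcc := eb_add G hreg (S \ {u, w})
      rw [hfsX, Finset.card_sdiff_of_subset hsub, hnSf, hpaircard] at hcc
      have hcceq : (edgeBoundary G (S \ {u, w})).ncard = s + 9 := by omega
      have hfrag : IsLambdaFragment G s (S \ {u, w}) := by
        refine ⟨hcut, ?_⟩
        rw [hlam, hcceq]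
      have := hmin _ hfrag
      rw [hX'ncard] at this
      omega
    · -- Mantel contradiction, parts of size ≥ 2
      obtain ⟨C, D, hCD, hdisjCD, hCne, hDne, hnoadj⟩ := split_of_not_rwconn G hc
      have hfsCD : fs C ∪ fs D = Sf \ {u, w} := by rw [← fs_union, hCD, hfsX]
      have hdisjF : Disjoint (fs C) (fs D) := fs_disjoint hdisjCD
      have hewsplit : ew G (Sf \ {u, w}) (Sf \ {u, w})
          = ew G (fs C) (fs C) + 2 * ew G (fs C) (fs D) + ew G (fs D) (fs D) := by
        rw [← hfsCD, ew_split G hdisjF]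
      have hcross : ew G (fs C) (fs D) = 0 := by
        apply ew_zero_of_no_adj
        intro a ha b hb
        exact hnoadj a (mem_fs.1 ha) b (mem_fs.1 hb)
      have hcross' : ew G (fs D) (fs C) = 0 := by rw [ew_comm]; exact hcross
      -- each part has at least 2 vertices
      have hbig : ∀ (E E' : Finset V), E ∪ E' = Sf \ {u, w} → Disjoint E E' →
          (∀ a ∈ E, ∀ b ∈ E', ¬ G.Adj a b) → E.Nonempty → 2 ≤ E.card := by
        intro E E' hEE hdE hnE hne
        obtain ⟨x, hx⟩ := hne
        have hxS : x ∈ Sf \ {u, w} := by rw [← hEE]; exact Finset.mem_union_left _ hx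
        have hxSf : x ∈ Sf := (Finset.mem_sdiff.1 hxS).1
        have hx3 := hdelta x (mem_fs.1 hxSf)
        have hxU : ndf G Sf x = ndf G (Sf \ {u, w}) x + ndf G ({u, w} : Finset V) x := by
          have h := ndf_union G hdisj x
          rw [← hU] at h
          exact h
        have hple : ndf G ({u, w} : Finset V) x ≤ 2 := by
          have := ndf_le_card G ({u, w} : Finset V) x
          omega
        have h1 : 1 ≤ ndf G (Sf \ {u, w}) x := by omega
        have hxsplit : ndf G (Sf \ {u, w}) x = ndf G E x + ndf G E' x := by
          rw [← hEE, ndf_union G hdE]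
        have hE'0 : ndf G E' x = 0 := by
          rw [ndf, Finset.card_eq_zero]
          ext y
          simp only [Finset.mem_inter, mem_neighborFinset, Finset.notMem_empty, iff_false]
          rintro ⟨h1', h2'⟩
          exact hnE x hx y h2' h1'
        have hEx : 1 ≤ ndf G E x := by omega
        exact two_le_card_of_ndf_pos G hx hEx
      have hp2 : 2 ≤ (fs C).card := by
        apply hbig (fs C) (fs D) hfsCD hdisjF _ (fs_nonempty hCne)
        intro a ha b hb
        exact hnoadj a (mem_fs.1 ha) b (mem_fs.1 hb)
      have hq2 : 2 ≤ (fs D).card := by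
        apply hbig (fs D) (fs C) _ hdisjF.symm _ (fs_nonempty hDne)
        · rw [Finset.union_comm]; exact hfsCD
        · intro a ha b hb
          intro hadj'
          exact hnoadj b (mem_fs.1 hb) a (mem_fs.1 ha) hadj'.symm
      have hm1 := mantel G htri (fs C).card (fs C) rfl
      have hm2 := mantel G htri (fs D).card (fs D) rfl
      have hpq : (fs C).card + (fs D).card = n - 2 := by
        rw [← Finset.card_union_of_disjoint hdisjF, hfsCD, Finset.card_sdiff_of_subset hsub, hnSf,
          hpaircard]
      obtain ⟨p, hp⟩ : ∃ p, (fs C).card = p := ⟨_, rfl⟩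
      obtain ⟨q, hq⟩ : ∃ q, (fs D).card = q := ⟨_, rfl⟩
      rw [hp] at hm1 hpq hp2
      rw [hq] at hm2 hpq hq2
      have hp8 : p ≤ 5 := by rcases hs with rfl | rfl <;> omega
      have hq8 : q ≤ 5 := by rcases hs with rfl | rfl <;> omega
      rcases hs with rfl | rfl <;>
        interval_cases p <;> interval_cases q <;> omega
  -- endgame
  rcases hsn with hn1 | hn3
  · -- n = s + 1 : impossible by degree sum
    have h3n : 3 * n ≤ M := by
      have h := Finset.card_nsmul_le_sum Sf (fun x => ndf G Sf x) 3
        (fun x hx => hdelta x (mem_fs.1 hx))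
      rw [hnSf] at h
      rw [hMdef, ew]
      calc 3 * n = n * 3 := by ring
      _ ≤ _ := h
    rcases hs with rfl | rfl <;> omega
  · by_cases hz5 : ∃ z ∈ Sf, ndf G Sf z = 5
    · obtain ⟨z, hzSf, hz5⟩ := hz5
      set N := G.neighborFinset z with hNdef
      have hNcard : N.card = 5 := hreg z
      have hNSfcard : ndf G Sf z = (N ∩ Sf).card := rfl
      have hNinter : N ∩ Sf = N := by
        apply Finset.eq_of_subset_of_card_le Finset.inter_subset_left
        rw [hNcard, ← hz5, hNSfcard]
      have hNsub : N ⊆ Sf := Finset.inter_eq_left.1 hNinter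
      have hzN : z ∉ N := by
        rw [hNdef, mem_neighborFinset]
        exact fun h => G.irrefl h
      have hNind : ∀ a ∈ N, ∀ b ∈ N, ¬ G.Adj a b := by
        intro a ha b hb hab
        rw [hNdef, mem_neighborFinset] at ha hb
        exact htri {z, a, b} (SimpleGraph.is3Clique_triple_iff.2 ⟨ha, hb, hab⟩)
      have hinsN : insert z N ⊆ Sf := Finset.insert_subset hzSf hNsub
      have hinscard : (insert z N).card = 6 := by
        rw [Finset.card_insert_of_notMem hzN, hNcard]
      set P := Sf \ insert z N with hPdef
      have hPcard : P.card = n - 6 := by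
        rw [hPdef, Finset.card_sdiff_of_subset hinsN, hnSf, hinscard]
      have hPsub : P ⊆ Sf := by rw [hPdef]; exact Finset.sdiff_subset
      have hzP : z ∉ P := by
        rw [hPdef, Finset.mem_sdiff]
        rintro ⟨-, h⟩
        exact h (Finset.mem_insert_self _ _)
      have hUzNP : insert z N ∪ P = Sf := by
        rw [hPdef]
        exact Finset.union_sdiff_of_subset hinsN
      have hdisjP : Disjoint (insert z N) P := by
        rw [hPdef]; exact Finset.disjoint_sdiff
      have hins_split : insert z N = {z} ∪ N := by rw [Finset.insert_eq]
      have hdisjzN : Disjoint ({z} : Finset V) N := by simpa using hzN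
      have hndf0 : ∀ x : V, ndf G Sf x = ndf G (insert z N) x + ndf G P x := by
        intro x
        rw [← hUzNP, ndf_union G hdisjP]
      have hvN : ∀ v ∈ N, ndf G Sf v = 1 + ndf G P v := by
        intro v hv
        have h0 := hndf0 v
        have h1 : ndf G (insert z N) v = 1 := by
          have hAdjvz : G.Adj v z := by
            rw [hNdef, mem_neighborFinset] at hv
            exact hv.symm
          have h2 : ndf G N v = 0 := by
            rw [ndf, Finset.card_eq_zero]
            ext y
            simp only [Finset.mem_inter, mem_neighborFinset, Finset.notMem_empty, iff_false]
            rintro ⟨h1', h2'⟩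
            exact hNind v hv y h2' h1'
          rw [hins_split, ndf_union G hdisjzN, ndf_singleton, if_pos hAdjvz, h2]
        omega
      have hvP : ∀ p ∈ P, ndf G Sf p = ndf G N p + ndf G P p := by
        intro p hp
        have h0 := hndf0 p
        have hpN : p ∉ N := by
          rw [hPdef, Finset.mem_sdiff] at hp
          exact fun hc => hp.2 (Finset.mem_insert_of_mem hc)
        have h1 : ndf G (insert z N) p = ndf G N p := by
          have hnadj : ¬ G.Adj p z := by
            intro h
            apply hpN
            rw [hNdef, mem_neighborFinset]
            exact h.symm
          rw [hins_split, ndf_union G hdisjzN, ndf_singleton, if_neg hnadj]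
          omega
        omega
      have hMsum : M = ∑ x ∈ Sf, ndf G Sf x := by rw [hMdef, ew]
      have hMdecomp : M = ndf G Sf z + ∑ v ∈ N, ndf G Sf v + ∑ p ∈ P, ndf G Sf p := by
        rw [hMsum, ← hUzNP, Finset.sum_union hdisjP, hins_split,
          Finset.sum_union hdisjzN, Finset.sum_singleton]
      rcases hs with rfl | rfl
      · -- s = 5, n = 8 : impossible because a second degree-5 vertex appears
        have hn8 : n = 8 := by omega
        have hP2 : P.card = 2 := by omega
        have hvP2 : ∀ v ∈ N, P ⊆ G.neighborFinset v := by
          intro v hv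
          have h1 := hvN v hv
          have h2 := hdelta v (mem_fs.1 (hNsub hv))
          have h3 := ndf_le_card G P v
          have h4 : ndf G P v = 2 := by omega
          have h5 : G.neighborFinset v ∩ P = P := by
            apply Finset.eq_of_subset_of_card_le Finset.inter_subset_right
            rw [hP2, ← h4]
            exact le_rfl
          intro y hy
          have : y ∈ G.neighborFinset v ∩ P := by rw [h5]; exact hy
          exact (Finset.mem_inter.1 this).1
        obtain ⟨p, hp⟩ : P.Nonempty := by rw [← Finset.card_pos, hP2]; omega
        have hNnbr : N ⊆ G.neighborFinset p := by
          intro v hv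
          rw [mem_neighborFinset]
          have h1 : p ∈ G.neighborFinset v := hvP2 v hv hp
          rw [mem_neighborFinset] at h1
          exact h1.symm
        have hp5 : 5 ≤ ndf G Sf p := by
          have hsub2 : N ⊆ G.neighborFinset p ∩ Sf := fun y hy =>
            Finset.mem_inter.2 ⟨hNnbr hy, hNsub hy⟩
          calc 5 = N.card := hNcard.symm
          _ ≤ _ := Finset.card_le_card hsub2
        have hpz : p ≠ z := fun h => hzP (h ▸ hp)
        have hpair_sub : ({z, p} : Finset V) ⊆ Sf := by
          intro x hx
          rw [Finset.mem_insert, Finset.mem_singleton] at hx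
          rcases hx with rfl | rfl
          · exact hzSf
          · exact hPsub hp
        have hUzp : ({z, p} : Finset V) ∪ (Sf \ {z, p}) = Sf :=
          Finset.union_sdiff_of_subset hpair_sub
        have hrestcard : (Sf \ {z, p}).card = n - 2 := by
          rw [Finset.card_sdiff_of_subset hpair_sub, hnSf,
            Finset.card_insert_of_notMem (by simpa using hpz.symm), Finset.card_singleton]
        have hrestsum : 3 * (n - 2) ≤ ∑ x ∈ Sf \ {z, p}, ndf G Sf x := by
          have h := Finset.card_nsmul_le_sum (Sf \ {z, p}) (fun x => ndf G Sf x) 3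
            (fun x hx => hdelta x (mem_fs.1 ((Finset.mem_sdiff.1 hx).1)))
          rw [hrestcard] at h
          calc 3 * (n - 2) = (n - 2) * 3 := by ring
          _ ≤ _ := h
        have hsplit2 : ∑ x ∈ ({z, p} : Finset V), ndf G Sf x
            + ∑ x ∈ Sf \ {z, p}, ndf G Sf x = ∑ x ∈ Sf, ndf G Sf x := by
          rw [← Finset.sum_union Finset.disjoint_sdiff, hUzp]
        have hzp_pair : ∑ x ∈ ({z, p} : Finset V), ndf G Sf x = ndf G Sf z + ndf G Sf p :=
          Finset.sum_pair hpz.symm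
        omega
      · -- s = 6, n = 9
        have hn9 : n = 9 := by omega
        have hP3 : P.card = 3 := by omega
        have hNPbound : ∀ v ∈ N, 2 ≤ ndf G P v := by
          intro v hv
          have h1 := hvN v hv
          have h2 := hdelta v (mem_fs.1 (hNsub hv))
          omega
        have hewNP : 10 ≤ ew G N P := by
          have h := Finset.card_nsmul_le_sum N (fun v => ndf G P v) 2 hNPbound
          rw [hNcard] at h
          calc (10 : ℕ) = 5 * 2 := by norm_num
          _ ≤ _ := h
        have hsumN : ∑ v ∈ N, ndf G Sf v = 5 + ew G N P := by
          rw [Finset.sum_congr rfl hvN, Finset.sum_add_distrib, Finset.sum_const,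
            smul_eq_mul, mul_one, hNcard, ew]
        have hsumP : ∑ p ∈ P, ndf G Sf p = ew G P N + ew G P P := by
          rw [Finset.sum_congr rfl hvP, Finset.sum_add_distrib, ew, ew]
        have hewPN : ew G P N = ew G N P := ew_comm G P N
        have hM30 : M = 30 := by omega
        have h20 : 2 * ew G N P + ew G P P = 20 := by omega
        have hewNP10 : ew G N P = 10 := by omega
        have hewPP0 : ew G P P = 0 := by omega
        have hvN3 : ∀ v ∈ N, ndf G Sf v = 3 := by
          intro v hv
          by_contra hcon
          have h2 : 3 ≤ ndf G P v := by
            have h3 := hvN v hv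
            have h4 := hNPbound v hv
            have h5 := hdelta v (mem_fs.1 (hNsub hv))
            omega
          have h6 : ndf G P v + ∑ x ∈ N.erase v, ndf G P x = ew G N P :=
            Finset.add_sum_erase N (fun x => ndf G P x) hv
          have h7 : 2 * (N.erase v).card ≤ ∑ x ∈ N.erase v, ndf G P x := by
            have h := Finset.card_nsmul_le_sum (N.erase v) (fun x => ndf G P x) 2
              (fun x hx => hNPbound x (Finset.mem_of_mem_erase hx))
            calc 2 * (N.erase v).card = (N.erase v).card * 2 := by ring
            _ ≤ _ := h
          have h8 : (N.erase v).card = 4 := by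
            rw [Finset.card_erase_of_mem hv, hNcard]
          omega
        have hPP0 : ∀ p ∈ P, ndf G P p = 0 := by
          intro p hp
          have h := (Finset.sum_eq_zero_iff.1 hewPP0) p hp
          exact h
        have hsumP10 : ∑ p ∈ P, ndf G Sf p = 10 := by omega
        have hexp : ∃ p ∈ P, ndf G Sf p = 3 := by
          by_contra hcon
          push_neg at hcon
          have h4 : ∀ p ∈ P, 4 ≤ ndf G Sf p := by
            intro p hp
            have h1 := hdelta p (mem_fs.1 (hPsub hp))
            have h2 := hcon p hp
            omega
          have h := Finset.card_nsmul_le_sum P (fun p => ndf G Sf p) 4 h4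
          rw [hP3, smul_eq_mul] at h
          omega
        obtain ⟨p, hpP, hp3⟩ := hexp
        have hndfNp : ndf G N p = 3 := by
          have h1 := hvP p hpP
          have h2 := hPP0 p hpP
          omega
        obtain ⟨u, huN, hup⟩ : ∃ u ∈ N, G.Adj p u :=
          exists_adj_of_ndf_pos G (by rw [hndfNp]; omega)
        exact hT2 u p (mem_fs.1 (hNsub huN)) (mem_fs.1 (hPsub hpP)) hup.symm
          (hvN3 u huN) hp3 hn3
    · -- all degrees in {3,4}
      push_neg at hz5
      have hle4 : ∀ z ∈ Sf, ndf G Sf z ≤ 4 := by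
        intro z hz
        have h1 := ndf_le_five G hreg Sf z
        have h2 := hz5 z hz
        omega
      set Z := Sf.filter (fun z => ndf G Sf z = 4) with hZdef
      have hZsub : Z ⊆ Sf := Finset.filter_subset _ _
      have hzsum : M = 3 * n + Z.card := by
        have hsplitsum := Finset.sum_filter_add_sum_filter_not Sf
          (fun z => ndf G Sf z = 4) (fun z => ndf G Sf z)
        have h1 : ∑ z ∈ Z, ndf G Sf z = 4 * Z.card := by
          rw [Finset.sum_congr rfl (fun z hz => (Finset.mem_filter.1 hz).2),
            Finset.sum_const, smul_eq_mul, mul_comm]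
        have h2 : ∑ z ∈ Sf.filter (fun z => ¬ ndf G Sf z = 4), ndf G Sf z
            = 3 * (Sf.filter (fun z => ¬ ndf G Sf z = 4)).card := by
          rw [Finset.sum_congr rfl (fun z hz => ?_), Finset.sum_const, smul_eq_mul, mul_comm]
          have hz1 := Finset.mem_filter.1 hz
          have := hdelta z (mem_fs.1 hz1.1)
          have := hle4 z hz1.1
          omega
        have h3 : Z.card + (Sf.filter (fun z => ¬ ndf G Sf z = 4)).card = n := by
          rw [← hnSf, hZdef]
          exact Finset.card_filter_add_card_filter_not _
        rw [← hZdef] at hsplitsum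
        have hM' : M = ∑ z ∈ Sf, ndf G Sf z := by rw [hMdef, ew]
        omega
      by_cases hedge : ∃ u ∈ Sf \ Z, ∃ w ∈ Sf \ Z, G.Adj u w
      · obtain ⟨u, hu, w, hw, hadj⟩ := hedge
        have hu' := Finset.mem_sdiff.1 hu
        have hw' := Finset.mem_sdiff.1 hw
        have hu3 : ndf G Sf u = 3 := by
          have h1 := hdelta u (mem_fs.1 hu'.1)
          have h2 := hle4 u hu'.1
          have h3 : ¬ ndf G Sf u = 4 := fun hc => hu'.2 (Finset.mem_filter.2 ⟨hu'.1, hc⟩)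
          omega
        have hw3 : ndf G Sf w = 3 := by
          have h1 := hdelta w (mem_fs.1 hw'.1)
          have h2 := hle4 w hw'.1
          have h3 : ¬ ndf G Sf w = 4 := fun hc => hw'.2 (Finset.mem_filter.2 ⟨hw'.1, hc⟩)
          omega
        exact hT2 u w (mem_fs.1 hu'.1) (mem_fs.1 hw'.1) hadj hu3 hw3 hn3
      · push_neg at hedge
        have hA0 : ew G (Sf \ Z) (Sf \ Z) = 0 := ew_zero_of_no_adj G hedge
        have hAS : ew G (Sf \ Z) Sf = 3 * (Sf \ Z).card := by
          rw [ew, Finset.sum_congr rfl (fun z hz => ?_), Finset.sum_const, smul_eq_mul, mul_comm]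
          have hz' := Finset.mem_sdiff.1 hz
          have h1 := hdelta z (mem_fs.1 hz'.1)
          have h2 := hle4 z hz'.1
          have h3 : ¬ ndf G Sf z = 4 := fun hc => hz'.2 (Finset.mem_filter.2 ⟨hz'.1, hc⟩)
          omega
        have hUZ : Sf = Z ∪ (Sf \ Z) := by
          rw [Finset.union_sdiff_of_subset hZsub]
        have hdisjZ : Disjoint Z (Sf \ Z) := Finset.disjoint_sdiff
        have hAsplit : ew G (Sf \ Z) Sf = ew G (Sf \ Z) Z + ew G (Sf \ Z) (Sf \ Z) := by
          nth_rewrite 2 [hUZ]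
          exact ew_union_right G _ hdisjZ
        have hZbound : ew G (Sf \ Z) Z ≤ 4 * Z.card := by
          rw [ew_comm]
          calc ew G Z (Sf \ Z) ≤ ew G Z Sf := ew_mono_right G _ (Finset.sdiff_subset)
          _ = 4 * Z.card := by
            rw [ew, Finset.sum_congr rfl (fun z hz => (Finset.mem_filter.1 hz).2),
              Finset.sum_const, smul_eq_mul, mul_comm]
        have hcardA : (Sf \ Z).card = n - Z.card := by
          rw [Finset.card_sdiff_of_subset hZsub, hnSf]
        have hZn : Z.card ≤ n := by rw [← hnSf]; exact Finset.card_le_card hZsub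
        rcases hs with rfl | rfl <;> omega
end
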